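/- arXiv:2603.04271 — 6 statements merged into one kernel-verified Lean document; each statement's English description precedes it below -/
import Mathlib

section
/- Let M be a tractable metric space and K a nonempty compact subset of M. Then the following are equivalent: (i) the map L ↦ mg(L), defined on the nonempty compact subsets of M equipped with the Hausdorff metric, is continuous at K; (ii) lim_{r↘0} mg(K_r) = mg(K), where K_r is the closed r-thickening of K in M; (iii) for every ε > 0 there exists δ > 0 such that mg(K_δ) < mg(K) + ε. -/
open MeasureTheory Metric Set Filter Topology TopologicalSpace

/-- The magnitude of a finite subset `F` of a metric space: the common value
`∑ p ∈ F, w p` over all weightings `w` (i.e. functions with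
`∑ q ∈ F, exp (-d p q) * w q = 1` for all `p ∈ F`), expressed as a supremum. -/
noncomputable def finMag {X : Type*} [MetricSpace X] (F : Finset X) : ℝ :=
  sSup {m : ℝ | ∃ w : X → ℝ,
    (∀ p ∈ F, ∑ q ∈ F, Real.exp (-dist p q) * w q = 1) ∧ m = ∑ p ∈ F, w p}

/-- The magnitude of a compact subset: the supremum of magnitudes of finite subsets. -/
noncomputable def cMag {X : Type*} [MetricSpace X] (K : Set X) : ℝ :=
  sSup {m : ℝ | ∃ F : Finset X, ↑F ⊆ K ∧ m = finMag F}

/-- A metric space is positive definite when the similarity matrix of every finite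
subset is positive definite. -/
def IsPosDefSpace (X : Type*) [MetricSpace X] : Prop :=
  ∀ F : Finset X, (Matrix.of fun p q : F => Real.exp (-dist (p : X) (q : X))).PosDef

/-- A metric space is tractable when it is positive definite and every closed ball
is compact and has finite magnitude. -/
def IsTractable (X : Type*) [MetricSpace X] : Prop :=
  IsPosDefSpace X ∧ ∀ (x : X) (r : ℝ), IsCompact (Metric.closedBall x r) ∧
    BddAbove {m : ℝ | ∃ F : Finset X, ↑F ⊆ Metric.closedBall x r ∧ m = finMag F}

namespace MagAux
variable {X : Type*} [MetricSpace X]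

/-- The similarity matrix of a finite subset. -/
noncomputable def simMat (F : Finset X) : Matrix F F ℝ :=
  Matrix.of fun p q : F => Real.exp (-dist (p : X) (q : X))

/-- The bilinear form associated to a finite subset. -/
noncomputable def Bf (F : Finset X) (f g : X → ℝ) : ℝ :=
  ∑ p ∈ F, ∑ q ∈ F, Real.exp (-dist p q) * f p * g q

lemma Bf_symm (F : Finset X) (f g : X → ℝ) : Bf F f g = Bf F g f := by
  rw [Bf, Finset.sum_comm]
  refine Finset.sum_congr rfl fun p _ => Finset.sum_congr rfl fun q _ => ?_
  rw [dist_comm]; ring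

lemma Bf_eq_dot (F : Finset X) (f g : X → ℝ) :
    Bf F f g = dotProduct (fun p : F => f p)
      ((simMat F).mulVec (fun q : F => g q)) := by
  rw [Bf, ← Finset.sum_coe_sort F]
  refine Finset.sum_congr rfl fun p _ => ?_
  rw [← Finset.sum_coe_sort F]
  rw [show (simMat F).mulVec (fun q : F => g q) p = ∑ q : F, simMat F p q * g q from rfl]
  rw [Finset.mul_sum]
  refine Finset.sum_congr rfl fun q _ => ?_
  simp only [simMat, Matrix.of_apply]; ring

lemma posDef_simMat (hX : IsPosDefSpace X) (F : Finset X) : (simMat F).PosDef := hX F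

lemma Bf_nonneg (hX : IsPosDefSpace X) (F : Finset X) (f : X → ℝ) : 0 ≤ Bf F f f := by
  have h := (posDef_simMat hX F).posSemidef.dotProduct_mulVec_nonneg (fun p : F => f p)
  rw [Bf_eq_dot]
  simpa using h

lemma Bf_pos (hX : IsPosDefSpace X) (F : Finset X) (f : X → ℝ)
    (hf : ∃ p, ∃ hp : p ∈ F, f p ≠ 0) : 0 < Bf F f f := by
  obtain ⟨p, hp, hfp⟩ := hf
  have hx : (fun p : F => f p) ≠ 0 := fun h => hfp (congrFun h ⟨p, hp⟩)
  have h := (posDef_simMat hX F).dotProduct_mulVec_pos (x := fun p : F => f p) hx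
  rw [Bf_eq_dot]
  simpa using h

lemma Bf_expand (F : Finset X) (f g : X → ℝ) (t : ℝ) :
    Bf F (fun x => f x + t * g x) (fun x => f x + t * g x)
      = Bf F g g * (t * t) + (2 * Bf F f g) * t + Bf F f f := by
  have key : ∀ p q : X, Real.exp (-dist p q) * (f p + t * g p) * (f q + t * g q)
      = (Real.exp (-dist p q) * g p * g q) * (t * t)
        + (Real.exp (-dist p q) * f p * g q) * t
        + (Real.exp (-dist p q) * g p * f q) * t
        + Real.exp (-dist p q) * f p * f q := fun p q => by ring
  have hgf : Bf F g f = Bf F f g := Bf_symm F g f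
  simp only [Bf] at hgf
  simp only [Bf, key, Finset.sum_add_distrib, ← Finset.sum_mul]
  linear_combination t * hgf

lemma Bf_sq_le (hX : IsPosDefSpace X) (F : Finset X) (f g : X → ℝ) :
    Bf F f g ^ 2 ≤ Bf F f f * Bf F g g := by
  have key : ∀ t : ℝ, 0 ≤ Bf F g g * (t * t) + (2 * Bf F f g) * t + Bf F f f := fun t => by
    have h := Bf_nonneg hX F (fun x => f x + t * g x)
    rw [Bf_expand] at h
    exact h
  have h := discrim_le_zero key
  rw [discrim] at h
  nlinarith [h]

lemma exists_weighting (hX : IsPosDefSpace X) (F : Finset X) :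
    ∃ u : X → ℝ, ∀ p ∈ F, ∑ q ∈ F, Real.exp (-dist p q) * u q = 1 := by
  classical
  have hdet : IsUnit (simMat F).det := (posDef_simMat hX F).det_pos.ne'.isUnit
  set u₀ : F → ℝ := (simMat F)⁻¹.mulVec (fun _ => 1) with hu₀
  refine ⟨fun x => if h : x ∈ F then u₀ ⟨x, h⟩ else 0, fun p hp => ?_⟩
  have h1 : (simMat F).mulVec u₀ = fun _ => 1 := by
    rw [hu₀, Matrix.mulVec_mulVec, Matrix.mul_nonsing_inv _ hdet, Matrix.one_mulVec]
  have h2 := congrFun h1 ⟨p, hp⟩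
  rw [show ((simMat F).mulVec u₀) ⟨p, hp⟩ = ∑ q : F, simMat F ⟨p, hp⟩ q * u₀ q from rfl] at h2
  rw [← h2, ← Finset.sum_coe_sort F]
  refine Finset.sum_congr rfl fun q _ => ?_
  simp only [simMat, Matrix.of_apply, dif_pos q.2]

lemma Bf_weighting (F : Finset X) (u : X → ℝ)
    (hu : ∀ p ∈ F, ∑ q ∈ F, Real.exp (-dist p q) * u q = 1) (v : X → ℝ) :
    Bf F v u = ∑ p ∈ F, v p := by
  rw [Bf]
  refine Finset.sum_congr rfl fun p hp => ?_
  have : ∑ q ∈ F, Real.exp (-dist p q) * v p * u q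
      = v p * ∑ q ∈ F, Real.exp (-dist p q) * u q := by
    rw [Finset.mul_sum]
    exact Finset.sum_congr rfl fun q _ => by ring
  rw [this, hu p hp, mul_one]

lemma finMag_eq_of_weighting (F : Finset X) (u : X → ℝ)
    (hu : ∀ p ∈ F, ∑ q ∈ F, Real.exp (-dist p q) * u q = 1) :
    finMag F = ∑ p ∈ F, u p := by
  have hset : {m : ℝ | ∃ w : X → ℝ,
      (∀ p ∈ F, ∑ q ∈ F, Real.exp (-dist p q) * w q = 1) ∧ m = ∑ p ∈ F, w p}
      = {∑ p ∈ F, u p} := by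
    ext m
    simp only [Set.mem_setOf_eq, Set.mem_singleton_iff]
    constructor
    · rintro ⟨w, hw, rfl⟩
      have h1 : Bf F u w = ∑ p ∈ F, u p := Bf_weighting F w hw u
      have h2 : Bf F w u = ∑ p ∈ F, w p := Bf_weighting F u hu w
      rw [← h2, Bf_symm, h1]
    · rintro rfl
      exact ⟨u, hu, rfl⟩
  rw [finMag, hset, csSup_singleton]

lemma finMag_nonneg (hX : IsPosDefSpace X) (F : Finset X) : 0 ≤ finMag F := by
  obtain ⟨u, hu⟩ := exists_weighting hX F
  rw [finMag_eq_of_weighting F u hu, ← Bf_weighting F u hu u]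
  exact Bf_nonneg hX F u

lemma finMag_pos (hX : IsPosDefSpace X) (F : Finset X) (hF : F.Nonempty) : 0 < finMag F := by
  obtain ⟨u, hu⟩ := exists_weighting hX F
  rw [finMag_eq_of_weighting F u hu, ← Bf_weighting F u hu u]
  refine Bf_pos hX F u ?_
  by_contra h
  push_neg at h
  obtain ⟨p, hp⟩ := hF
  have := hu p hp
  rw [Finset.sum_eq_zero (fun q hq => by rw [h q hq, mul_zero])] at this
  exact zero_ne_one this

lemma sum_sq_le_Bf_mul_finMag (hX : IsPosDefSpace X) (F : Finset X) (v : X → ℝ) :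
    (∑ p ∈ F, v p) ^ 2 ≤ Bf F v v * finMag F := by
  obtain ⟨u, hu⟩ := exists_weighting hX F
  rw [finMag_eq_of_weighting F u hu]
  have h1 : Bf F v u = ∑ p ∈ F, v p := Bf_weighting F u hu v
  have h2 : Bf F u u = ∑ p ∈ F, u p := Bf_weighting F u hu u
  calc (∑ p ∈ F, v p) ^ 2 = Bf F v u ^ 2 := by rw [h1]
    _ ≤ Bf F v v * Bf F u u := Bf_sq_le hX F v u
    _ = Bf F v v * ∑ p ∈ F, u p := by rw [h2]

lemma finMag_empty : finMag (∅ : Finset X) = 0 := by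
  have hset : {m : ℝ | ∃ w : X → ℝ,
      (∀ p ∈ (∅ : Finset X), ∑ q ∈ (∅ : Finset X), Real.exp (-dist p q) * w q = 1)
        ∧ m = ∑ p ∈ (∅ : Finset X), w p} = {0} := by
    ext m
    simp
  rw [finMag, hset, csSup_singleton]

lemma exp_neg_sub_le {a b : ℝ} (ha : 0 ≤ a) (hb : 0 ≤ b) :
    |Real.exp (-a) - Real.exp (-b)| ≤ |a - b| := by
  wlog h : b ≤ a with H
  · rw [abs_sub_comm, abs_sub_comm a b]
    exact H hb ha (le_of_not_ge h)
  have h1 : Real.exp (-a) ≤ Real.exp (-b) := Real.exp_le_exp.2 (by linarith)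
  rw [abs_of_nonpos (by linarith), abs_of_nonneg (by linarith)]
  have h3 := Real.add_one_le_exp (-(a - b))
  have h4 : Real.exp (-a) = Real.exp (-b) * Real.exp (-(a - b)) := by
    rw [← Real.exp_add]; ring_nf
  have h5 : Real.exp (-b) ≤ 1 := by
    rw [show (1 : ℝ) = Real.exp 0 from (Real.exp_zero).symm]
    exact Real.exp_le_exp.2 (by linarith)
  nlinarith [Real.exp_pos (-(a - b)), Real.exp_pos (-b)]

lemma exists_sep (F : Finset X) :
    ∃ δ₀ : ℝ, 0 < δ₀ ∧ ∀ p ∈ F, ∀ q ∈ F, p ≠ q → δ₀ ≤ dist p q := by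
  classical
  set D := ((F ×ˢ F).filter fun pq => pq.1 ≠ pq.2).image fun pq => dist pq.1 pq.2 with hD
  by_cases hDne : D.Nonempty
  · refine ⟨D.min' hDne, ?_, ?_⟩
    · obtain ⟨pq, hpq, hmin⟩ := Finset.mem_image.1 (D.min'_mem hDne)
      rw [← hmin]
      exact dist_pos.2 (Finset.mem_filter.1 hpq).2
    · intro p hp q hq hne
      exact D.min'_le _ (Finset.mem_image.2
        ⟨(p, q), Finset.mem_filter.2 ⟨Finset.mk_mem_product hp hq, hne⟩, rfl⟩)
  · refine ⟨1, one_pos, fun p hp q hq hne => absurd ?_ hDne⟩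
    exact ⟨dist p q, Finset.mem_image.2
      ⟨(p, q), Finset.mem_filter.2 ⟨Finset.mk_mem_product hp hq, hne⟩, rfl⟩⟩

lemma cMagSet_nonempty (S : Set X) :
    {m : ℝ | ∃ F : Finset X, ↑F ⊆ S ∧ m = finMag F}.Nonempty :=
  ⟨finMag (∅ : Finset X), ⟨∅, by simp, rfl⟩⟩

lemma finMag_le_cMag {S : Set X} {F : Finset X}
    (hbdd : BddAbove {m : ℝ | ∃ F : Finset X, ↑F ⊆ S ∧ m = finMag F}) (hFS : ↑F ⊆ S) :
    finMag F ≤ cMag S :=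
  le_csSup hbdd ⟨F, hFS, rfl⟩

lemma cMag_nonneg {S : Set X}
    (hbdd : BddAbove {m : ℝ | ∃ F : Finset X, ↑F ⊆ S ∧ m = finMag F}) : 0 ≤ cMag S := by
  rw [← finMag_empty (X := X)]
  exact finMag_le_cMag hbdd (by simp)

lemma cMag_mono {S T : Set X} (hST : S ⊆ T)
    (hbdd : BddAbove {m : ℝ | ∃ F : Finset X, ↑F ⊆ T ∧ m = finMag F}) : cMag S ≤ cMag T :=
  csSup_le_csSup hbdd (cMagSet_nonempty S)
    (fun _ ⟨F, h, e⟩ => ⟨F, h.trans hST, e⟩)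

lemma bddAbove_cMagSet (hM : IsTractable X) {S : Set X} (hS : Bornology.IsBounded S)
    (x : X) : BddAbove {m : ℝ | ∃ F : Finset X, ↑F ⊆ S ∧ m = finMag F} := by
  obtain ⟨r, hr⟩ := hS.subset_closedBall x
  refine BddAbove.mono ?_ ((hM.2 x r).2)
  rintro m ⟨F, h, e⟩
  exact ⟨F, h.trans hr, e⟩

lemma mem_cthickening_of_infDist_le {s : Set X} (hs : s.Nonempty) {x : X} {δ : ℝ}
    (h : Metric.infDist x s ≤ δ) : x ∈ Metric.cthickening δ s := by
  rw [Metric.mem_cthickening_iff]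
  obtain ⟨y, hy⟩ := hs
  have hne : Metric.infEDist x s ≠ ⊤ :=
    ne_top_of_le_ne_top (edist_ne_top x y) (EMetric.infEdist_le_edist_of_mem hy)
  rw [← ENNReal.ofReal_toReal hne]
  exact ENNReal.ofReal_le_ofReal h

lemma infDist_le_of_mem_cthickening {s : Set X} {x : X} {δ : ℝ} (hδ : 0 ≤ δ)
    (h : x ∈ Metric.cthickening δ s) : Metric.infDist x s ≤ δ := by
  rw [Metric.mem_cthickening_iff] at h
  calc Metric.infDist x s = (EMetric.infEdist x s).toReal := rfl
    _ ≤ (ENNReal.ofReal δ).toReal := ENNReal.toReal_mono ENNReal.ofReal_ne_top h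
    _ = δ := ENNReal.toReal_ofReal hδ

open scoped Classical in
/-- Push a function forward along `φ` over the finset `F`. -/
noncomputable def pushf (F : Finset X) (φ : X → X) (v : X → ℝ) : X → ℝ :=
  fun x => ∑ p ∈ F, if φ p = x then v p else 0

lemma pushf_apply (F : Finset X) (φ : X → X) (v : X → ℝ)
    (hinj : ∀ p ∈ F, ∀ q ∈ F, φ p = φ q → p = q) {p : X} (hp : p ∈ F) :
    pushf F φ v (φ p) = v p := by
  classical
  rw [pushf]
  rw [Finset.sum_eq_single_of_mem p hp]
  · simp
  · intro q hq hqp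
    rw [if_neg (fun h => hqp (hinj q hq p hp h))]

lemma sum_image_pushf [DecidableEq X] (F : Finset X) (φ : X → X) (v : X → ℝ)
    (hinj : ∀ p ∈ F, ∀ q ∈ F, φ p = φ q → p = q) :
    ∑ x ∈ F.image φ, pushf F φ v x = ∑ p ∈ F, v p := by
  rw [Finset.sum_image hinj]
  exact Finset.sum_congr rfl fun p hp => pushf_apply F φ v hinj hp

lemma Bf_image_pushf [DecidableEq X] (F : Finset X) (φ : X → X) (v : X → ℝ)
    (hinj : ∀ p ∈ F, ∀ q ∈ F, φ p = φ q → p = q) :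
    Bf (F.image φ) (pushf F φ v) (pushf F φ v)
      = ∑ p ∈ F, ∑ q ∈ F, Real.exp (-dist (φ p) (φ q)) * v p * v q := by
  rw [Bf, Finset.sum_image hinj]
  refine Finset.sum_congr rfl fun p hp => ?_
  rw [Finset.sum_image hinj]
  refine Finset.sum_congr rfl fun q hq => ?_
  rw [pushf_apply F φ v hinj hp, pushf_apply F φ v hinj hq]

lemma cMag_lsc (hM : IsTractable X) (K : TopologicalSpace.NonemptyCompacts X) {ε : ℝ}
    (hε : 0 < ε) :
    ∃ η : ℝ, 0 < η ∧ ∀ L : TopologicalSpace.NonemptyCompacts X, dist L K < η →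
      cMag (K : Set X) - ε < cMag (L : Set X) := by
  classical
  obtain ⟨x₀, hx₀⟩ := K.nonempty
  have hlt : cMag (K : Set X) - ε < sSup {m : ℝ | ∃ F : Finset X, ↑F ⊆ (K : Set X) ∧ m = finMag F} := sub_lt_self _ hε
  obtain ⟨m0, ⟨F, hFK, rfl⟩, hm⟩ := exists_lt_of_lt_csSup (cMagSet_nonempty (K : Set X)) hlt
  by_cases hF : F.Nonempty
  · obtain ⟨u, hu⟩ := exists_weighting hM.1 F
    set m := finMag F with hmdef
    have hmeq : m = ∑ p ∈ F, u p := finMag_eq_of_weighting F u hu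
    have hmpos : 0 < m := finMag_pos hM.1 F hF
    set c := cMag (K : Set X) - ε with hc
    have hcm : c < m := hm
    set C := (∑ p ∈ F, |u p|) ^ 2 with hC
    have hC0 : 0 ≤ C := sq_nonneg _
    have habs : (0 : ℝ) < |c| + 1 := by positivity
    set ε'' := m * (m - c) / (2 * (|c| + 1)) with hε''def
    have hε''pos : 0 < ε'' := div_pos (mul_pos hmpos (by linarith)) (by linarith)
    obtain ⟨δ₀, hδ₀pos, hδ₀⟩ := exists_sep F
    set η := min (δ₀ / 4) (ε'' / (2 * C + 1)) with hη
    have hηpos : 0 < η := lt_min (by linarith) (by positivity)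
    refine ⟨η, hηpos, fun L L_close => ?_⟩
    rw [Metric.NonemptyCompacts.dist_eq] at L_close
    have hEdist : EMetric.hausdorffEdist (L : Set X) (K : Set X) ≠ ⊤ :=
      Metric.hausdorffEdist_ne_top_of_nonempty_of_bounded L.nonempty K.nonempty
        L.isCompact.isBounded K.isCompact.isBounded
    have hchoice : ∀ x : X, ∃ y : X, y ∈ (L : Set X) ∧ (x ∈ (K : Set X) → dist x y < η) := by
      intro x
      by_cases hx : x ∈ (K : Set X)
      · obtain ⟨y, hyL, hxy⟩ := Metric.exists_dist_lt_of_hausdorffDist_lt' hx L_close hEdist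
        exact ⟨y, hyL, fun _ => by rw [dist_comm]; exact hxy⟩
      · obtain ⟨y, hy⟩ := L.nonempty
        exact ⟨y, hy, fun h => absurd h hx⟩
    choose φ hφL hφd using hchoice
    have hφd' : ∀ p ∈ F, dist p (φ p) < η := fun p hp => hφd p (hFK hp)
    have hinj : ∀ p ∈ F, ∀ q ∈ F, φ p = φ q → p = q := by
      intro p hp q hq heq
      by_contra hne
      have h1 := hδ₀ p hp q hq hne
      have h2 : dist p q ≤ dist p (φ p) + dist (φ p) q := dist_triangle _ _ _
      have h3 : dist (φ p) q = dist q (φ q) := by rw [heq, dist_comm]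
      have h4 := hφd' p hp
      have h5 := hφd' q hq
      have hη4 : η ≤ δ₀ / 4 := min_le_left _ _
      linarith
    set F' := F.image φ with hF'
    have hF'L : ↑F' ⊆ (L : Set X) := by
      intro x hx
      simp only [hF', Finset.coe_image, Set.mem_image, Finset.mem_coe] at hx
      obtain ⟨p, _, rfl⟩ := hx
      exact hφL p
    set w := pushf F φ u with hw
    have hsum : ∑ x ∈ F', w x = ∑ p ∈ F, u p := sum_image_pushf F φ u hinj
    have hQ : Bf F' w w = ∑ p ∈ F, ∑ q ∈ F, Real.exp (-dist (φ p) (φ q)) * u p * u q :=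
      Bf_image_pushf F φ u hinj
    have hBuu : Bf F u u = m := by rw [Bf_weighting F u hu u, hmeq]
    have hηC : 2 * η * C ≤ ε'' := by
      have h1 : η ≤ ε'' / (2 * C + 1) := min_le_right _ _
      have h2 : η * (2 * C + 1) ≤ ε'' := by
        rw [← le_div_iff₀ (by positivity)]
        exact h1
      nlinarith [hηpos]
    have hbound : Bf F' w w ≤ m + ε'' := by
      have key : ∀ p ∈ F, ∀ q ∈ F, Real.exp (-dist (φ p) (φ q)) * u p * u q
          ≤ Real.exp (-dist p q) * u p * u q + 2 * η * (|u p| * |u q|) := by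
        intro p hp q hq
        have hd : |dist (φ p) (φ q) - dist p q| ≤ 2 * η := by
          have h1 := dist_dist_dist_le (φ p) (φ q) p q
          rw [Real.dist_eq] at h1
          have h2 := (hφd' p hp).le
          have h3 := (hφd' q hq).le
          rw [dist_comm (φ p) p, dist_comm (φ q) q] at h1
          linarith
        have he : |Real.exp (-dist (φ p) (φ q)) - Real.exp (-dist p q)| ≤ 2 * η :=
          le_trans (exp_neg_sub_le dist_nonneg dist_nonneg) hd
        have h4 : (Real.exp (-dist (φ p) (φ q)) - Real.exp (-dist p q)) * (u p * u q)
            ≤ 2 * η * (|u p| * |u q|) := by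
          calc (Real.exp (-dist (φ p) (φ q)) - Real.exp (-dist p q)) * (u p * u q)
              ≤ |(Real.exp (-dist (φ p) (φ q)) - Real.exp (-dist p q)) * (u p * u q)| :=
                le_abs_self _
            _ = |Real.exp (-dist (φ p) (φ q)) - Real.exp (-dist p q)| * (|u p| * |u q|) := by
                rw [abs_mul, abs_mul]
            _ ≤ 2 * η * (|u p| * |u q|) :=
                mul_le_mul_of_nonneg_right he (by positivity)
        ring_nf at h4 ⊢
        linarith
      have hsum2 : Bf F' w w ≤ Bf F u u + 2 * η * C := by
        rw [hQ, hC]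
        have h5 : ∑ p ∈ F, ∑ q ∈ F, Real.exp (-dist (φ p) (φ q)) * u p * u q
            ≤ ∑ p ∈ F, ∑ q ∈ F,
                (Real.exp (-dist p q) * u p * u q + 2 * η * (|u p| * |u q|)) :=
          Finset.sum_le_sum fun p hp => Finset.sum_le_sum fun q hq => key p hp q hq
        have h6 : ∑ p ∈ F, ∑ q ∈ F,
              (Real.exp (-dist p q) * u p * u q + 2 * η * (|u p| * |u q|))
            = Bf F u u + 2 * η * (∑ p ∈ F, |u p|) ^ 2 := by
          have e1 : (∑ p ∈ F, |u p|) ^ 2 = ∑ p ∈ F, ∑ q ∈ F, |u p| * |u q| := by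
            rw [sq, Finset.sum_mul_sum]
          rw [Bf, e1, Finset.mul_sum, ← Finset.sum_add_distrib]
          refine Finset.sum_congr rfl fun p hp => ?_
          rw [Finset.mul_sum, ← Finset.sum_add_distrib]
        linarith [h5, le_of_eq h6]
      calc Bf F' w w ≤ Bf F u u + 2 * η * C := hsum2
        _ = m + 2 * η * C := by rw [hBuu]
        _ ≤ m + ε'' := by linarith
    have hkey := sum_sq_le_Bf_mul_finMag hM.1 F' w
    rw [hsum, ← hmeq] at hkey
    have hfm' : (0 : ℝ) ≤ finMag F' := finMag_nonneg hM.1 F'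
    have hbddL := bddAbove_cMagSet hM L.isCompact.isBounded x₀
    have hle : finMag F' ≤ cMag (L : Set X) := finMag_le_cMag hbddL hF'L
    by_contra hcon
    push_neg at hcon
    have hf'c : finMag F' ≤ c := by rw [hc]; exact hle.trans hcon
    have h1 : m ^ 2 ≤ (m + ε'') * finMag F' :=
      le_trans hkey (mul_le_mul_of_nonneg_right hbound hfm')
    have h2 : (m + ε'') * finMag F' ≤ (m + ε'') * c :=
      mul_le_mul_of_nonneg_left hf'c (by linarith)
    have hcabs : c ≤ |c| := le_abs_self c
    have hε''eq : ε'' * (2 * (|c| + 1)) = m * (m - c) := by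
      rw [hε''def]; field_simp
    nlinarith [mul_le_mul_of_nonneg_left hcabs hε''pos.le, hε''pos, h1, h2, hε''eq,
      mul_nonneg hε''pos.le (abs_nonneg c)]
  · refine ⟨1, one_pos, fun L _ => ?_⟩
    have h0 := cMag_nonneg (bddAbove_cMagSet hM L.isCompact.isBounded x₀)
    have h1 : finMag F = 0 := by rw [Finset.not_nonempty_iff_eq_empty.1 hF, finMag_empty]
    linarith

end MagAux

theorem stmt0 {M : Type*} [MetricSpace M] (hM : IsTractable M)
    (K : NonemptyCompacts M) :
    List.TFAE
      [ContinuousAt (fun L : NonemptyCompacts M => cMag (L : Set M)) K,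
       Tendsto (fun r : ℝ => cMag (Metric.cthickening r (K : Set M))) (𝓝[>] 0)
         (𝓝 (cMag (K : Set M))),
       ∀ ε : ℝ, 0 < ε → ∃ δ : ℝ, 0 < δ ∧
         cMag (Metric.cthickening δ (K : Set M)) < cMag (K : Set M) + ε] := by
  obtain ⟨x₀, hx₀⟩ := K.nonempty
  have hprop : ProperSpace M := ⟨fun x r => (hM.2 x r).1⟩
  have hcomp : ∀ r : ℝ, IsCompact (cthickening r (K : Set M)) := fun r =>
    Metric.isCompact_of_isClosed_isBounded Metric.isClosed_cthickening
      (K.isCompact.isBounded.cthickening)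
  set T : ℝ → NonemptyCompacts M := fun r =>
    ⟨⟨cthickening r (K : Set M), hcomp r⟩,
      K.nonempty.mono (Metric.self_subset_cthickening _)⟩ with hT
  tfae_have 1 → 2
  | h1 => by
    have hTto : Tendsto T (𝓝[>] (0 : ℝ)) (𝓝 K) := by
      rw [Metric.tendsto_nhds]
      intro ε hε
      filter_upwards [Ioo_mem_nhdsGT_of_mem (Set.left_mem_Ico.2 hε)] with r hr
      have hdist : dist (T r) K ≤ r := by
        rw [Metric.NonemptyCompacts.dist_eq]
        apply Metric.hausdorffDist_le_of_infDist hr.1.le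
        · intro x hx
          exact MagAux.infDist_le_of_mem_cthickening hr.1.le hx
        · intro x hx
          show Metric.infDist x (cthickening r (K : Set M)) ≤ r
          rw [Metric.infDist_zero_of_mem (Metric.self_subset_cthickening _ hx)]
          exact hr.1.le
      linarith [hr.2]
    have hcomp2 := (h1.tendsto).comp hTto
    exact hcomp2
  tfae_have 2 → 3
  | h2 => by
    intro ε hε
    have hev : ∀ᶠ r in 𝓝[>] (0 : ℝ),
        cMag (cthickening r (K : Set M)) < cMag (K : Set M) + ε :=
      h2.eventually (gt_mem_nhds (lt_add_of_pos_right _ hε))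
    obtain ⟨δ, hδ1, hδ2⟩ := (hev.and self_mem_nhdsWithin).exists
    exact ⟨δ, hδ2, hδ1⟩
  tfae_have 3 → 1
  | h3 => by
    rw [Metric.continuousAt_iff]
    intro ε hε
    obtain ⟨δ, hδpos, hδ⟩ := h3 ε hε
    obtain ⟨η, hηpos, hη⟩ := MagAux.cMag_lsc hM K hε
    refine ⟨min δ η, lt_min hδpos hηpos, fun L hL => ?_⟩
    have hL1 : dist L K < δ := lt_of_lt_of_le hL (min_le_left _ _)
    have hL2 : dist L K < η := lt_of_lt_of_le hL (min_le_right _ _)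
    have hupper : cMag (L : Set M) < cMag (K : Set M) + ε := by
      have hEdist : EMetric.hausdorffEdist (L : Set M) (K : Set M) ≠ ⊤ :=
        Metric.hausdorffEdist_ne_top_of_nonempty_of_bounded L.nonempty K.nonempty
          L.isCompact.isBounded K.isCompact.isBounded
      have hsub : (L : Set M) ⊆ cthickening δ (K : Set M) := by
        intro x hx
        apply MagAux.mem_cthickening_of_infDist_le K.nonempty
        calc Metric.infDist x (K : Set M)
            ≤ Metric.hausdorffDist (L : Set M) (K : Set M) :=
              Metric.infDist_le_hausdorffDist_of_mem hx hEdist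
          _ ≤ δ := by rw [← Metric.NonemptyCompacts.dist_eq]; exact hL1.le
      have hbdd := MagAux.bddAbove_cMagSet hM (S := cthickening δ (K : Set M)) (K.isCompact.isBounded.cthickening) x₀
      exact lt_of_le_of_lt (MagAux.cMag_mono hsub hbdd) hδ
    have hlower := hη L hL2
    rw [Real.dist_eq, abs_sub_lt_iff]
    constructor <;> linarith
  tfae_finish
end

section
/- Let N ∈ ℕ, let F be a nonempty skew finite subset of ℓ1^N, let r ∈ (0, skew(F)/2), let p, q ∈ F and t ∈ [−1,1]^N. Then (1/2^N) ∫_{ℝ^N} e^{−d1(x, q+rt)} dμ_{p,r}(x) = e^{−d1(C̄_p(r), q+rt)}, where d1(A, y) denotes the infimum of d1-distances from points of A to y. -/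
open MeasureTheory Metric Set Filter Topology
open scoped ENNReal

/-- The 1-metric on `ℝ^N`. -/
noncomputable def d1 {N : ℕ} (x y : Fin N → ℝ) : ℝ := ∑ k, |x k - y k|

/-- The infimum of 1-distances from points of `A` to `y`. -/
noncomputable def d1Inf {N : ℕ} (A : Set (Fin N → ℝ)) (y : Fin N → ℝ) : ℝ :=
  sInf ((fun z => d1 z y) '' A)

/-- The skewness of a set `S ⊆ ℝ^N`. -/
noncomputable def skewness {N : ℕ} (S : Set (Fin N → ℝ)) : ℝ≥0∞ :=
  ⨅ (a : S) (b : S) (_ : a ≠ b) (k : Fin N), ENNReal.ofReal |a.1 k - b.1 k|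

/-- A set is skew when its skewness is positive. -/
def IsSkew {N : ℕ} (S : Set (Fin N → ℝ)) : Prop := 0 < skewness S

/-- The closed cube with center `p` and "radius" `r`. -/
def cube {N : ℕ} (p : Fin N → ℝ) (r : ℝ) : Set (Fin N → ℝ) :=
  {x | ∀ k, x k ∈ Set.Icc (p k - r) (p k + r)}

/-- The product measure `⊗_k (δ_{p_k - r} + δ_{p_k + r} + Leb|_{[p_k - r, p_k + r]})`. -/
noncomputable def cubeMeasure {N : ℕ} (p : Fin N → ℝ) (r : ℝ) :
    Measure (Fin N → ℝ) :=
  Measure.pi fun k =>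
    Measure.dirac (p k - r) + Measure.dirac (p k + r) +
      volume.restrict (Set.Icc (p k - r) (p k + r))

lemma int_exp_neg_sub (a b c : ℝ) :
    ∫ s in a..b, Real.exp (-(s - c)) = Real.exp (-(a - c)) - Real.exp (-(b - c)) := by
  have hderiv : ∀ s ∈ Set.uIcc a b,
      HasDerivAt (fun s => -Real.exp (-(s - c))) (Real.exp (-(s - c))) s := by
    intro s _
    have h1 : HasDerivAt (fun s : ℝ => -(s - c)) (-1) s := ((hasDerivAt_id s).sub_const c).neg
    have h2 := h1.exp
    have h3 := h2.neg
    simp only [mul_neg, mul_one, neg_neg] at h3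
    exact h3
  have hint : IntervalIntegrable (fun s => Real.exp (-(s - c))) volume a b := by
    apply Continuous.intervalIntegrable; continuity
  rw [intervalIntegral.integral_eq_sub_of_hasDerivAt hderiv hint]
  ring

lemma int_exp_sub (a b c : ℝ) :
    ∫ s in a..b, Real.exp (s - c) = Real.exp (b - c) - Real.exp (a - c) := by
  have hderiv : ∀ s ∈ Set.uIcc a b,
      HasDerivAt (fun s => Real.exp (s - c)) (Real.exp (s - c)) s := by
    intro s _
    have h1 : HasDerivAt (fun s : ℝ => s - c) 1 s := (hasDerivAt_id s).sub_const c
    simpa using h1.exp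
  have hint : IntervalIntegrable (fun s => Real.exp (s - c)) volume a b := by
    apply Continuous.intervalIntegrable; continuity
  rw [intervalIntegral.integral_eq_sub_of_hasDerivAt hderiv hint]

lemma oneDim (a b c : ℝ) (hab : a ≤ b) :
    ∫ s, Real.exp (-|s - c|)
      ∂(Measure.dirac a + Measure.dirac b + volume.restrict (Set.Icc a b)) =
      2 * Real.exp (-|max a (min b c) - c|) := by
  have hcont : Continuous fun s : ℝ => Real.exp (-|s - c|) := by continuity
  haveI : IsFiniteMeasure (volume.restrict (Set.Icc a b)) :=
    ⟨by rw [Measure.restrict_apply_univ, Real.volume_Icc]; exact ENNReal.ofReal_lt_top⟩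
  have hbound : ∀ (μ : Measure ℝ) [IsFiniteMeasure μ],
      Integrable (fun s => Real.exp (-|s - c|)) μ := by
    intro μ _
    refine (integrable_const (1 : ℝ)).mono' hcont.aestronglyMeasurable ?_
    filter_upwards with s
    rw [Real.norm_eq_abs, abs_of_pos (Real.exp_pos _)]
    exact Real.exp_le_one_iff.mpr (neg_nonpos.mpr (abs_nonneg _))
  rw [integral_add_measure (hbound _) (hbound _), integral_add_measure (hbound _) (hbound _),
    integral_dirac, integral_dirac]
  have hIcc : ∫ s in Set.Icc a b, Real.exp (-|s - c|) = ∫ s in a..b, Real.exp (-|s - c|) := by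
    rw [integral_Icc_eq_integral_Ioc, intervalIntegral.integral_of_le hab]
  rw [hIcc]
  rcases le_total c a with h1 | h1
  · have hmin : min b c = c := min_eq_right (h1.trans hab)
    have hmax : max a (min b c) = a := by rw [hmin]; exact max_eq_left h1
    have hcong : ∫ s in a..b, Real.exp (-|s - c|) = ∫ s in a..b, Real.exp (-(s - c)) := by
      apply intervalIntegral.integral_congr
      intro s hs
      rw [Set.uIcc_of_le hab] at hs
      obtain ⟨hs1, hs2⟩ := hs
      dsimp only
      rw [abs_of_nonneg (by linarith)]
    rw [hcong, int_exp_neg_sub, hmax,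
      abs_of_nonneg (by linarith : (0:ℝ) ≤ a - c),
      abs_of_nonneg (by linarith : (0:ℝ) ≤ b - c)]
    ring
  · rcases le_total b c with h2 | h2
    · have hmax : max a (min b c) = b := by rw [min_eq_left h2]; exact max_eq_right hab
      have hcong : ∫ s in a..b, Real.exp (-|s - c|) = ∫ s in a..b, Real.exp (s - c) := by
        apply intervalIntegral.integral_congr
        intro s hs
        rw [Set.uIcc_of_le hab] at hs
        obtain ⟨hs1, hs2⟩ := hs
        dsimp only
        rw [abs_of_nonpos (by linarith), neg_neg]
      rw [hcong, int_exp_sub, hmax,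
        abs_of_nonpos (by linarith : a - c ≤ 0), abs_of_nonpos (by linarith : b - c ≤ 0)]
      rw [neg_neg, neg_neg]
      ring
    · have hmax : max a (min b c) = c := by rw [min_eq_right h2]; exact max_eq_right h1
      have hsplit : ∫ s in a..b, Real.exp (-|s - c|) =
          (∫ s in a..c, Real.exp (-|s - c|)) + ∫ s in c..b, Real.exp (-|s - c|) := by
        rw [intervalIntegral.integral_add_adjacent_intervals] <;>
          exact (by continuity : Continuous fun s : ℝ => Real.exp (-|s - c|)).intervalIntegrable _ _
      have hc1 : ∫ s in a..c, Real.exp (-|s - c|) = ∫ s in a..c, Real.exp (s - c) := by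
        apply intervalIntegral.integral_congr
        intro s hs
        rw [Set.uIcc_of_le h1] at hs
        obtain ⟨hs1, hs2⟩ := hs
        dsimp only
        rw [abs_of_nonpos (by linarith), neg_neg]
      have hc2 : ∫ s in c..b, Real.exp (-|s - c|) = ∫ s in c..b, Real.exp (-(s - c)) := by
        apply intervalIntegral.integral_congr
        intro s hs
        rw [Set.uIcc_of_le h2] at hs
        obtain ⟨hs1, hs2⟩ := hs
        dsimp only
        rw [abs_of_nonneg (by linarith)]
      rw [hsplit, hc1, hc2, int_exp_sub, int_exp_neg_sub, hmax,
        abs_of_nonpos (show a - c ≤ 0 by linarith),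
        abs_of_nonneg (show (0:ℝ) ≤ b - c by linarith), sub_self, abs_zero, neg_zero,
        neg_neg, Real.exp_zero]
      ring

lemma clamp_le (a b x y : ℝ) (hab : a ≤ b) (hx1 : a ≤ x) (hx2 : x ≤ b) :
    |max a (min b y) - y| ≤ |x - y| := by
  rcases le_total y a with h | h
  · rw [min_eq_right (h.trans hab), max_eq_left h, abs_of_nonneg (by linarith)]
    calc a - y ≤ x - y := by linarith
    _ ≤ |x - y| := le_abs_self _
  · rcases le_total b y with h2 | h2
    · rw [min_eq_left h2, max_eq_right hab, abs_of_nonpos (by linarith)]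
      calc -(b - y) = y - b := by ring
      _ ≤ y - x := by linarith
      _ ≤ |y - x| := le_abs_self _
      _ = |x - y| := abs_sub_comm _ _
    · rw [min_eq_right h2, max_eq_right h, sub_self, abs_zero]
      exact abs_nonneg _

lemma d1Inf_cube {N : ℕ} (p : Fin N → ℝ) (r : ℝ) (hr : 0 < r) (y : Fin N → ℝ) :
    d1Inf (cube p r) y = ∑ k, |max (p k - r) (min (p k + r) (y k)) - y k| := by
  set z : Fin N → ℝ := fun k => max (p k - r) (min (p k + r) (y k)) with hz
  have hzc : z ∈ cube p r := by
    intro k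
    constructor
    · exact le_max_left _ _
    · exact max_le (by linarith) (min_le_left _ _)
  have hlb : ∀ x ∈ cube p r, d1 z y ≤ d1 x y := by
    intro x hx
    apply Finset.sum_le_sum
    intro k _
    exact clamp_le _ _ _ _ (by linarith) (hx k).1 (hx k).2
  apply le_antisymm
  · exact csInf_le ⟨0, fun v ⟨x, _, hxv⟩ => hxv ▸ Finset.sum_nonneg fun k _ => abs_nonneg _⟩
      ⟨z, hzc, rfl⟩
  · exact le_csInf ⟨_, z, hzc, rfl⟩ (fun v ⟨x, hx, hxv⟩ => hxv ▸ hlb x hx)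

theorem stmt5 {N : ℕ} (F : Finset (Fin N → ℝ)) (hF : F.Nonempty)
    (hskew : IsSkew (F : Set (Fin N → ℝ)))
    (r : ℝ) (hr : 0 < r)
    (hr' : ENNReal.ofReal (2 * r) < skewness (F : Set (Fin N → ℝ)))
    (p : Fin N → ℝ) (hp : p ∈ F) (q : Fin N → ℝ) (hq : q ∈ F)
    (t : Fin N → ℝ) (ht : ∀ k, t k ∈ Set.Icc (-1 : ℝ) 1) :
    (1 / 2 ^ N) * ∫ x, Real.exp (-d1 x (q + r • t)) ∂(cubeMeasure p r) =
      Real.exp (-d1Inf (cube p r) (q + r • t)) := by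
  classical
  set y : Fin N → ℝ := q + r • t with hy
  set μ : Fin N → Measure ℝ := fun k =>
    Measure.dirac (p k - r) + Measure.dirac (p k + r) +
      volume.restrict (Set.Icc (p k - r) (p k + r)) with hμ
  haveI hfin : ∀ k, IsFiniteMeasure (μ k) := by
    intro k
    haveI : IsFiniteMeasure (volume.restrict (Set.Icc (p k - r) (p k + r))) :=
      ⟨by rw [Measure.restrict_apply_univ, Real.volume_Icc]; exact ENNReal.ofReal_lt_top⟩
    rw [hμ]
    infer_instance
  have hprodform : (∫ x, Real.exp (-d1 x y) ∂(cubeMeasure p r)) =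
      ∫ x, ∏ k, Real.exp (-|x k - y k|) ∂(cubeMeasure p r) := by
    congr 1
    funext x
    rw [← Real.exp_sum]
    congr 1
    rw [d1, ← Finset.sum_neg_distrib]
  have hpi : (∫ x : Fin N → ℝ, ∏ k, Real.exp (-|x k - y k|) ∂(cubeMeasure p r)) =
      ∏ k, ∫ s, Real.exp (-|s - y k|) ∂(μ k) :=
    MeasureTheory.integral_fintype_prod_eq_prod (ι := Fin N) (E := fun _ => ℝ)
      (fun k s => Real.exp (-|s - y k|)) (μ := μ)
  have hone : ∀ k, ∫ s, Real.exp (-|s - y k|) ∂(μ k) =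
      2 * Real.exp (-|max (p k - r) (min (p k + r) (y k)) - y k|) := fun k =>
    oneDim (p k - r) (p k + r) (y k) (by linarith)
  rw [hprodform, hpi, Finset.prod_congr rfl (fun k _ => hone k), Finset.prod_mul_distrib,
    Finset.prod_const, Finset.card_univ, Fintype.card_fin, ← Real.exp_sum,
    d1Inf_cube p r hr y]
  have hsum : ∑ k, -|max (p k - r) (min (p k + r) (y k)) - y k| =
      -∑ k, |max (p k - r) (min (p k + r) (y k)) - y k| := Finset.sum_neg_distrib _
  rw [hsum]
  have h2 : (2:ℝ) ^ N ≠ 0 := by positivity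
  field_simp
end

section
/- Let N ∈ ℕ, let F be a nonempty skew finite subset of ℓ1^N, let r ∈ (0, skew(F)/2), let p, q ∈ F, s, t ∈ [−1,1]^N and u ∈ {−1,1}^N. If p ∈ cn(q,u), then d1(p + rs, q + rt) = d1(p + rs, q + ru) + d1(ru, rt) and d1(C̄_p(r), q + rt) = d1(C̄_p(r), q + ru) + d1(ru, rt), where d1(A, y) denotes the infimum of d1-distances from points of A to y. -/
open Metric Set Filter Topology
open scoped ENNReal Classical

/-- The sign vector associated to `s : Fin N → Bool` (`true ↦ 1`, `false ↦ -1`). -/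
def sgnVec {N : ℕ} (s : Fin N → Bool) : Fin N → ℝ := fun k => if s k then 1 else -1

/-- The `u`-corner of `F` at `q`. -/
noncomputable def corner {N : ℕ} (F : Finset (Fin N → ℝ)) (q : Fin N → ℝ)
    (u : Fin N → Bool) : Finset (Fin N → ℝ) :=
  F.filter fun p => ∀ k, Real.sign (p k - q k) = sgnVec u k

lemma d1Inf_cube_aux {N : ℕ} (p y : Fin N → ℝ) (r : ℝ) (hr : 0 < r)
    (hy : ∀ k, r ≤ |p k - y k|) :
    d1Inf (cube p r) y = ∑ k, (|p k - y k| - r) := by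
  classical
  set z : Fin N → ℝ := fun k => if y k ≤ p k then p k - r else p k + r with hz
  have hzc : z ∈ cube p r := by
    intro k
    by_cases h : y k ≤ p k <;> simp [hz, h, Set.mem_Icc] <;> linarith
  have hzd : d1 z y = ∑ k, (|p k - y k| - r) := by
    unfold d1
    refine Finset.sum_congr rfl fun k _ => ?_
    have hk := hy k
    by_cases h : y k ≤ p k
    · have habs : |p k - y k| = p k - y k := abs_of_nonneg (by linarith)
      rw [habs] at hk
      have hzk : z k = p k - r := if_pos h
      rw [hzk, habs, abs_of_nonneg (by linarith)]
      ring
    · push_neg at h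
      have habs : |p k - y k| = -(p k - y k) := abs_of_nonpos (by linarith)
      rw [habs] at hk
      have hzk : z k = p k + r := if_neg (by linarith)
      rw [hzk, habs, abs_of_nonpos (by linarith)]
      ring
  unfold d1Inf
  apply le_antisymm
  · refine csInf_le ⟨0, ?_⟩ ⟨z, hzc, hzd⟩
    rintro w ⟨z', _, rfl⟩
    exact Finset.sum_nonneg fun k _ => abs_nonneg _
  · refine le_csInf ⟨_, z, hzc, rfl⟩ ?_
    rintro w ⟨z', hz', rfl⟩
    refine le_trans (le_of_eq rfl) ?_
    unfold d1
    refine Finset.sum_le_sum fun k _ => ?_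
    have h1 : |p k - z' k| ≤ r := by
      have := hz' k; rw [Set.mem_Icc] at this
      rw [abs_le]; constructor <;> linarith [this.1, this.2]
    have h2 : |p k - y k| ≤ |p k - z' k| + |z' k - y k| := abs_sub_le _ _ _
    linarith

theorem stmt7 {N : ℕ} (F : Finset (Fin N → ℝ)) (hF : F.Nonempty)
    (hskew : IsSkew (F : Set (Fin N → ℝ)))
    (r : ℝ) (hr : 0 < r)
    (hr' : ENNReal.ofReal (2 * r) < skewness (F : Set (Fin N → ℝ)))
    (p q : Fin N → ℝ) (hp : p ∈ F) (hq : q ∈ F)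
    (s t : Fin N → ℝ) (hs : ∀ k, s k ∈ Set.Icc (-1 : ℝ) 1)
    (ht : ∀ k, t k ∈ Set.Icc (-1 : ℝ) 1)
    (u : Fin N → Bool) (hpu : p ∈ corner F q u) :
    d1 (p + r • s) (q + r • t) =
      d1 (p + r • s) (q + r • sgnVec u) + d1 (r • sgnVec u) (r • t) ∧
    d1Inf (cube p r) (q + r • t) =
      d1Inf (cube p r) (q + r • sgnVec u) + d1 (r • sgnVec u) (r • t) := by
  have hsign : ∀ k, Real.sign (p k - q k) = sgnVec u k := by
    have := (Finset.mem_filter.mp hpu).2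
    exact this
  have hgap : ∀ k, 2 * r < |p k - q k| := by
    intro k
    have hne : p ≠ q := by
      intro h
      have hk := hsign k
      rw [h, sub_self, Real.sign_zero] at hk
      by_cases hu : u k <;> simp [sgnVec, hu] at hk <;> norm_num at hk
    have h1 : skewness (F : Set (Fin N → ℝ)) ≤ ENNReal.ofReal |p k - q k| := by
      refine le_trans (iInf_le _ (⟨p, by simpa using hp⟩ : (F : Set (Fin N → ℝ)))) ?_
      refine le_trans (iInf_le _ (⟨q, by simpa using hq⟩ : (F : Set (Fin N → ℝ)))) ?_
      exact le_trans (iInf_le _ (by simpa using hne)) (iInf_le _ k)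
    have h2 := lt_of_lt_of_le hr' h1
    rwa [ENNReal.ofReal_lt_ofReal_iff_of_nonneg (by positivity)] at h2
  have huk : ∀ k, if u k then 2 * r < p k - q k else p k - q k < -(2 * r) := by
    intro k
    have hg := hgap k
    have hsk := hsign k
    by_cases hu : u k
    · rw [if_pos hu]
      have hsk' : Real.sign (p k - q k) = 1 := by rw [hsk]; simp [sgnVec, hu]
      have hpos : 0 < p k - q k := by
        rcases lt_trichotomy (p k - q k) 0 with h | h | h
        · rw [Real.sign_of_neg h] at hsk'; norm_num at hsk'
        · rw [h, Real.sign_zero] at hsk'; norm_num at hsk'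
        · exact h
      rw [abs_of_pos hpos] at hg; exact hg
    · rw [if_neg hu]
      have hsk' : Real.sign (p k - q k) = -1 := by rw [hsk]; simp [sgnVec, hu]
      have hneg : p k - q k < 0 := by
        rcases lt_trichotomy (p k - q k) 0 with h | h | h
        · exact h
        · rw [h, Real.sign_zero] at hsk'; norm_num at hsk'
        · rw [Real.sign_of_pos h] at hsk'; norm_num at hsk'
      rw [abs_of_neg hneg] at hg; linarith
  have key1 : ∀ k, |(p + r • s) k - (q + r • t) k| =
      |(p + r • s) k - (q + r • sgnVec u) k| + |(r • sgnVec u) k - (r • t) k| := by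
    intro k
    obtain ⟨hs1, hs2⟩ := hs k
    obtain ⟨ht1, ht2⟩ := ht k
    have huk' := huk k
    have hbs1 : -r ≤ r * s k := by nlinarith
    have hbs2 : r * s k ≤ r := by nlinarith
    have hbt1 : -r ≤ r * t k := by nlinarith
    have hbt2 : r * t k ≤ r := by nlinarith
    by_cases hu : u k
    · rw [if_pos hu] at huk'
      have hsg : sgnVec u k = 1 := by simp [sgnVec, hu]
      simp only [Pi.add_apply, Pi.smul_apply, hsg, smul_eq_mul, mul_one]
      rw [abs_of_nonneg (by linarith), abs_of_nonneg (by linarith),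
        abs_of_nonneg (by linarith)]
      ring
    · rw [if_neg hu] at huk'
      have hsg : sgnVec u k = -1 := by simp [sgnVec, hu]
      simp only [Pi.add_apply, Pi.smul_apply, hsg, smul_eq_mul, mul_neg, mul_one]
      rw [abs_of_nonpos (by linarith), abs_of_nonpos (by linarith),
        abs_of_nonpos (by linarith)]
      ring
  constructor
  · unfold d1
    rw [← Finset.sum_add_distrib]
    exact Finset.sum_congr rfl fun k _ => key1 k
  · have hy1 : ∀ k, r ≤ |p k - (q + r • t) k| := by
      intro k
      have huk' := huk k
      obtain ⟨ht1, ht2⟩ := ht k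
      have hbt1 : -r ≤ r * t k := by nlinarith
      have hbt2 : r * t k ≤ r := by nlinarith
      simp only [Pi.add_apply, Pi.smul_apply, smul_eq_mul]
      by_cases hu : u k
      · rw [if_pos hu] at huk'
        rw [abs_of_nonneg (by linarith)]; linarith
      · rw [if_neg hu] at huk'
        rw [abs_of_nonpos (by linarith)]; linarith
    have hy2 : ∀ k, r ≤ |p k - (q + r • sgnVec u) k| := by
      intro k
      have huk' := huk k
      by_cases hu : u k
      · rw [if_pos hu] at huk'
        have hsg : sgnVec u k = 1 := by simp [sgnVec, hu]
        simp only [Pi.add_apply, Pi.smul_apply, smul_eq_mul, hsg, mul_one]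
        rw [abs_of_nonneg (by linarith)]; linarith
      · rw [if_neg hu] at huk'
        have hsg : sgnVec u k = -1 := by simp [sgnVec, hu]
        simp only [Pi.add_apply, Pi.smul_apply, smul_eq_mul, hsg, mul_neg_one]
        rw [abs_of_nonpos (by linarith)]; linarith
    rw [d1Inf_cube_aux p _ r hr hy1, d1Inf_cube_aux p _ r hr hy2]
    unfold d1
    rw [← Finset.sum_add_distrib]
    refine Finset.sum_congr rfl fun k _ => ?_
    have huk' := huk k
    obtain ⟨ht1, ht2⟩ := ht k
    have hbt1 : -r ≤ r * t k := by nlinarith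
    have hbt2 : r * t k ≤ r := by nlinarith
    by_cases hu : u k
    · rw [if_pos hu] at huk'
      have hsg : sgnVec u k = 1 := by simp [sgnVec, hu]
      simp only [Pi.add_apply, Pi.smul_apply, hsg, smul_eq_mul, mul_one]
      rw [abs_of_nonneg (by linarith), abs_of_nonneg (by linarith),
        abs_of_nonneg (by linarith)]
      ring
    · rw [if_neg hu] at huk'
      have hsg : sgnVec u k = -1 := by simp [sgnVec, hu]
      simp only [Pi.add_apply, Pi.smul_apply, hsg, smul_eq_mul, mul_neg, mul_one]
      rw [abs_of_nonpos (by linarith), abs_of_nonpos (by linarith),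
        abs_of_nonpos (by linarith)]
      ring
end

section
/- Let N ∈ ℕ, let F be a nonempty skew finite subset of ℓ1^N with m := |F|, and let r ∈ (0, skew(F)/2). Then the 2^N·m points p + rs (p ∈ F, s ∈ {−1,1}^N) are pairwise distinct, the coefficient matrix of the Vertex System is the similarity matrix (e^{−d1(p+rs, q+rt)})_{(p,s),(q,t)} of this vertex set, this matrix is positive definite (hence invertible), and consequently the Vertex System has a unique solution. -/
open Metric Set Filter Topology
open scoped ENNReal Classical

/-- The Vertex System: for every `q ∈ F` and `t ∈ {-1,1}^N`,
`∑_{p ∈ F, s ∈ {-1,1}^N} x p s · e^{-d1(p+rs, q+rt)} = ∑_{p ∈ F \ {q}} e^{-d1(C̄_p(r), q+rt)}`. -/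
def VertexSystem {N : ℕ} (F : Finset (Fin N → ℝ)) (r : ℝ)
    (x : (Fin N → ℝ) → (Fin N → Bool) → ℝ) : Prop :=
  ∀ q ∈ F, ∀ t : Fin N → Bool,
    (∑ p ∈ F, ∑ s : Fin N → Bool,
        x p s * Real.exp (-d1 (p + r • sgnVec s) (q + r • sgnVec t))) =
      ∑ p ∈ F.erase q, Real.exp (-d1Inf (cube p r) (q + r • sgnVec t))


section Aux
open MeasureTheory

section Core
variable {ι : Type*} [Fintype ι] {N : ℕ}

/-- The half-open box `∏ (0, u_a k]`. -/
noncomputable def kbox (u : ι → Fin N → ℝ) (a : ι) : Set (Fin N → ℝ) :=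
  Set.pi Set.univ fun k => Set.Ioc 0 (u a k)

lemma kbox_meas (u : ι → Fin N → ℝ) (a : ι) : MeasurableSet (kbox u a) :=
  MeasurableSet.univ_pi fun _ => measurableSet_Ioc

lemma kbox_inter (u : ι → Fin N → ℝ) (a b : ι) :
    kbox u a ∩ kbox u b = Set.pi Set.univ fun k => Set.Ioc 0 (min (u a k) (u b k)) := by
  rw [kbox, kbox, ← Set.pi_inter_distrib]
  simp [Set.Ioc_inter_Ioc]

lemma vol_pi_Ioc (m : Fin N → ℝ) :
    volume (Set.pi Set.univ fun k => Set.Ioc 0 (m k)) = ∏ k, ENNReal.ofReal (m k) := by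
  rw [volume_pi_pi]
  simp [Real.volume_Ioc]

lemma indicator_mul_indicator (s t : Set (Fin N → ℝ)) (x : Fin N → ℝ) :
    s.indicator (fun _ => (1:ℝ)) x * t.indicator (fun _ => (1:ℝ)) x
      = (s ∩ t).indicator (fun _ => (1:ℝ)) x := by
  by_cases hs : x ∈ s <;> by_cases ht : x ∈ t <;>
    simp [Set.indicator_apply, hs, ht, Set.mem_inter_iff]

lemma integrable_ind (s : Set (Fin N → ℝ)) (hs : MeasurableSet s) (hv : volume s < ⊤) :
    Integrable (s.indicator fun _ => (1:ℝ)) := by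
  rw [integrable_indicator_iff hs]
  exact integrableOn_const hv.ne

theorem minKernel (u : ι → Fin N → ℝ) (hu : Function.Injective u)
    (hupos : ∀ a k, 0 < u a k) (d : ι → ℝ) :
    0 ≤ ∑ a, ∑ b, d a * d b * ∏ k, min (u a k) (u b k) ∧
    ((∑ a, ∑ b, d a * d b * ∏ k, min (u a k) (u b k)) = 0 → d = 0) := by
  set g : (Fin N → ℝ) → ℝ := fun x => ∑ a, d a * (kbox u a).indicator (fun _ => (1:ℝ)) x with hg
  have hvol : ∀ a b : ι, volume (kbox u a ∩ kbox u b) = ∏ k, ENNReal.ofReal (min (u a k) (u b k)) := by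
    intro a b; rw [kbox_inter, vol_pi_Ioc]
  have hvolfin : ∀ a b : ι, volume (kbox u a ∩ kbox u b) < ⊤ := by
    intro a b; rw [hvol]
    exact ENNReal.prod_lt_top fun k _ => ENNReal.ofReal_lt_top
  have hvola : ∀ a : ι, volume (kbox u a) < ⊤ := by
    intro a
    have := hvolfin a a
    simpa using this
  have hintab : ∀ a b : ι,
      Integrable (fun x => (d a * d b) * ((kbox u a ∩ kbox u b).indicator (fun _ => (1:ℝ)) x)) := by
    intro a b
    exact (integrable_ind _ ((kbox_meas u a).inter (kbox_meas u b)) (hvolfin a b)).const_mul _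
  have hsq : ∀ x, g x ^ 2 = ∑ a, ∑ b, (d a * d b) * ((kbox u a ∩ kbox u b).indicator (fun _ => (1:ℝ)) x) := by
    intro x
    rw [sq, hg, Finset.sum_mul_sum]
    refine Finset.sum_congr rfl fun a _ => Finset.sum_congr rfl fun b _ => ?_
    rw [← indicator_mul_indicator (kbox u a) (kbox u b) x]
    ring
  have hQ : ∫ x, g x ^ 2 = ∑ a, ∑ b, d a * d b * ∏ k, min (u a k) (u b k) := by
    have : ∫ x, g x ^ 2 = ∑ a, ∑ b, ∫ x, (d a * d b) * ((kbox u a ∩ kbox u b).indicator (fun _ => (1:ℝ)) x) := by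
      simp_rw [hsq]
      rw [integral_finset_sum _ (fun a _ => integrable_finset_sum _ (fun b _ => hintab a b))]
      exact Finset.sum_congr rfl fun a _ => integral_finset_sum _ (fun b _ => hintab a b)
    rw [this]
    refine Finset.sum_congr rfl fun a _ => Finset.sum_congr rfl fun b _ => ?_
    rw [integral_const_mul, integral_indicator_const (1:ℝ) ((kbox_meas u a).inter (kbox_meas u b))]
    rw [measureReal_def, hvol a b, smul_eq_mul, mul_one, ENNReal.toReal_prod]
    congr 1
    exact Finset.prod_congr rfl fun k _ =>
      ENNReal.toReal_ofReal (le_min (hupos a k).le (hupos b k).le)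
  have hIntsq : Integrable (fun x => g x ^ 2) := by
    have : (fun x => g x ^ 2) = fun x => ∑ a, ∑ b, (d a * d b) * ((kbox u a ∩ kbox u b).indicator (fun _ => (1:ℝ)) x) := funext hsq
    rw [this]
    exact integrable_finset_sum _ fun a _ => integrable_finset_sum _ fun b _ => hintab a b
  constructor
  · rw [← hQ]
    exact integral_nonneg fun x => sq_nonneg _
  · intro h0
    have hae : (fun x => g x ^ 2) =ᵐ[volume] 0 := by
      rw [← integral_eq_zero_iff_of_nonneg (fun x => sq_nonneg (g x)) hIntsq]
      rw [hQ]; exact h0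
    have hgae : g =ᵐ[volume] 0 := by
      filter_upwards [hae] with x hx
      have : g x ^ 2 = 0 := hx
      exact sq_eq_zero_iff.mp this
    -- upset sums
    set U : ι → Finset ι := fun a => Finset.univ.filter fun b => ∀ k, u a k ≤ u b k with hU
    have hmemU : ∀ a b : ι, b ∈ U a ↔ ∀ k, u a k ≤ u b k := by
      intro a b; simp [hU]
    have haU : ∀ a, a ∈ U a := fun a => (hmemU a a).mpr fun k => le_rfl
    have hS : ∀ a, ∑ b ∈ U a, d b = 0 := by
      intro a
      -- choose ε
      set vals : Finset ℝ := Finset.univ.image (fun bk : ι × Fin N => u bk.1 bk.2) ∪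
        (Finset.univ.image (fun bk : ι × Fin N => u a bk.2 - u bk.1 bk.2)).filter (fun x => 0 < x) with hvals
      set E : Finset ℝ := insert 1 vals with hE
      have hEne : E.Nonempty := ⟨1, Finset.mem_insert_self _ _⟩
      set ε : ℝ := E.min' hEne with hε
      have hεpos : 0 < ε := by
        have hmem := E.min'_mem hEne
        rw [← hε] at hmem
        rcases Finset.mem_insert.mp hmem with h | h
        · rw [hε] at *; rw [h]; norm_num
        · rcases Finset.mem_union.mp h with h | h
          · obtain ⟨bk, _, hbk⟩ := Finset.mem_image.mp h
            rw [← hbk]; exact hupos _ _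
          · exact (Finset.mem_filter.mp h).2
      have hεle : ∀ k, ε ≤ u a k := by
        intro k
        apply Finset.min'_le
        exact Finset.mem_insert_of_mem (Finset.mem_union_left _
          (Finset.mem_image.mpr ⟨(a, k), Finset.mem_univ _, rfl⟩))
      have hgap : ∀ b k, u b k < u a k → u b k ≤ u a k - ε := by
        intro b k hlt
        have : ε ≤ u a k - u b k := by
          apply Finset.min'_le
          refine Finset.mem_insert_of_mem (Finset.mem_union_right _ (Finset.mem_filter.mpr ⟨?_, by linarith⟩))
          exact Finset.mem_image.mpr ⟨(b, k), Finset.mem_univ _, rfl⟩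
        linarith
      set R : Set (Fin N → ℝ) := Set.pi Set.univ fun k => Set.Ioc (u a k - ε) (u a k) with hR
      have hRvol : volume R = ∏ k : Fin N, ENNReal.ofReal ε := by
        rw [hR, volume_pi_pi]
        simp [Real.volume_Ioc]
      have hRpos : 0 < volume R := by
        rw [hRvol]
        rw [CanonicallyOrderedAdd.prod_pos]
        intro k _
        exact ENNReal.ofReal_pos.mpr hεpos
      have hgR : ∀ x ∈ R, g x = ∑ b ∈ U a, d b := by
        intro x hx
        have hxk : ∀ k, u a k - ε < x k ∧ x k ≤ u a k := by
          intro k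
          have := hx k (Set.mem_univ k)
          exact ⟨this.1, this.2⟩
        have hmem : ∀ b : ι, x ∈ kbox u b ↔ b ∈ U a := by
          intro b
          rw [hmemU]
          constructor
          · intro hxb k
            by_contra hlt
            push_neg at hlt
            have h1 := (hxb k (Set.mem_univ k)).2
            have h2 := hgap b k hlt
            have h3 := (hxk k).1
            linarith
          · intro hbU k _
            refine ⟨?_, le_trans (hxk k).2 (hbU k)⟩
            have := (hxk k).1
            have := hεle k
            linarith
        have hgx : g x = ∑ b : ι, d b * (kbox u b).indicator (fun _ => (1:ℝ)) x := rfl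
        rw [hgx]
        rw [← Finset.sum_filter_add_sum_filter_not Finset.univ (fun b => b ∈ U a)]
        have h1 : ∑ b ∈ Finset.univ.filter (fun b => b ∈ U a), d b * (kbox u b).indicator (fun _ => (1:ℝ)) x
            = ∑ b ∈ U a, d b := by
          rw [Finset.filter_mem_eq_inter, Finset.univ_inter]
          refine Finset.sum_congr rfl fun b hb => ?_
          rw [Set.indicator_of_mem ((hmem b).mpr hb)]
          ring
        have h2 : ∑ b ∈ Finset.univ.filter (fun b => ¬ b ∈ U a), d b * (kbox u b).indicator (fun _ => (1:ℝ)) x = 0 := by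
          refine Finset.sum_eq_zero fun b hb => ?_
          rw [Finset.mem_filter] at hb
          rw [Set.indicator_of_notMem (fun hxb => hb.2 ((hmem b).mp hxb))]
          ring
        rw [h1, h2, add_zero]
      by_contra hSne
      have hsub : R ⊆ {x | g x ≠ 0} := fun x hx => by
        rw [Set.mem_setOf_eq, hgR x hx]; exact hSne
      have hnull : volume {x | g x ≠ 0} = 0 := by
        have h := MeasureTheory.ae_iff.mp hgae
        simpa using h
      have : volume R ≤ volume {x | g x ≠ 0} := measure_mono hsub
      rw [hnull] at this
      exact absurd (le_antisymm this zero_le) (ne_of_gt hRpos)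
    -- induction on upset cardinality
    have key : ∀ n : ℕ, ∀ a : ι, (U a).card ≤ n → d a = 0 := by
      intro n
      induction n with
      | zero =>
        intro a ha
        have : 0 < (U a).card := Finset.card_pos.mpr ⟨a, haU a⟩
        omega
      | succ n ih =>
        intro a ha
        have hrest : ∀ b ∈ (U a).erase a, d b = 0 := by
          intro b hb
          have hbU := Finset.mem_of_mem_erase hb
          have hbne := Finset.ne_of_mem_erase hb
          apply ih
          have hbU' : ∀ k, u a k ≤ u b k := (hmemU a b).mp hbU
          have hsub : U b ⊆ (U a).erase a := by
            intro c hc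
            rw [hmemU] at hc
            rw [Finset.mem_erase]
            constructor
            · rintro rfl
              exact hbne (hu (funext fun k => le_antisymm (hc k) (hbU' k)))
            · exact (hmemU a c).mpr fun k => le_trans (hbU' k) (hc k)
          calc (U b).card ≤ ((U a).erase a).card := Finset.card_le_card hsub
            _ = (U a).card - 1 := Finset.card_erase_of_mem (haU a)
            _ ≤ n := by omega
        have := hS a
        rw [← Finset.add_sum_erase _ _ (haU a)] at this
        rw [Finset.sum_eq_zero hrest, add_zero] at this
        exact this
    funext a
    exact key (U a).card a le_rfl

end Core

section Kernel

lemma exp_abs_decomp (x y : ℝ) :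
    Real.exp (-|x - y|) = Real.exp (-(x + y)) * min (Real.exp (2 * x)) (Real.exp (2 * y)) := by
  rcases le_total x y with h | h
  · rw [abs_of_nonpos (by linarith), min_eq_left (Real.exp_le_exp.mpr (by linarith)),
      ← Real.exp_add]
    congr 1; ring
  · rw [abs_of_nonneg (by linarith), min_eq_right (Real.exp_le_exp.mpr (by linarith)),
      ← Real.exp_add]
    congr 1; ring

theorem l1exp_posDef {ι : Type*} [Fintype ι] {N : ℕ} (v : ι → Fin N → ℝ)
    (hv : Function.Injective v) :
    (Matrix.of fun a b : ι => Real.exp (-∑ k, |v a k - v b k|)).PosDef := by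
  set u : ι → Fin N → ℝ := fun a k => Real.exp (2 * v a k) with hu'
  set f : ι → ℝ := fun a => Real.exp (-∑ k, v a k) with hf'
  have hupos : ∀ a k, 0 < u a k := fun a k => Real.exp_pos _
  have huinj : Function.Injective u := by
    intro a b hab
    apply hv
    funext k
    have : Real.exp (2 * v a k) = Real.exp (2 * v b k) := congrFun hab k
    have := Real.exp_injective this
    linarith
  have entry : ∀ a b : ι, Real.exp (-∑ k, |v a k - v b k|)
      = f a * f b * ∏ k, min (u a k) (u b k) := by
    intro a b
    have h1 : Real.exp (-∑ k, |v a k - v b k|) = ∏ k, Real.exp (-|v a k - v b k|) := by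
      rw [← Real.exp_sum]
      congr 1
      rw [← Finset.sum_neg_distrib]
    rw [h1]
    have h2 : ∀ k : Fin N, k ∈ Finset.univ → Real.exp (-|v a k - v b k|)
        = Real.exp (-(v a k + v b k)) * min (u a k) (u b k) := fun k _ => exp_abs_decomp _ _
    rw [Finset.prod_congr rfl h2, Finset.prod_mul_distrib]
    congr 1
    rw [← Real.exp_sum]
    show _ = Real.exp (-∑ k, v a k) * Real.exp (-∑ k, v b k)
    rw [← Real.exp_add]
    congr 1
    rw [← Finset.sum_neg_distrib, ← Finset.sum_neg_distrib, ← Finset.sum_add_distrib]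
    exact Finset.sum_congr rfl fun k _ => by ring
  rw [Matrix.posDef_iff_dotProduct_mulVec]
  constructor
  · show _ = _
    ext a b
    simp only [Matrix.conjTranspose_apply, Matrix.of_apply, star_trivial]
    congr 2
    exact Finset.sum_congr rfl fun k _ => abs_sub_comm _ _
  · intro c hc
    have hform : dotProduct (star c)
        ((Matrix.of fun a b : ι => Real.exp (-∑ k, |v a k - v b k|)).mulVec c)
        = ∑ a, ∑ b, (c a * f a) * (c b * f b) * ∏ k, min (u a k) (u b k) := by
      simp only [dotProduct, Matrix.mulVec, Matrix.of_apply, star_trivial, Pi.star_apply]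
      rw [Finset.sum_congr rfl fun a _ => Finset.mul_sum _ _ _]
      refine Finset.sum_congr rfl fun a _ => Finset.sum_congr rfl fun b _ => ?_
      rw [entry a b]
      ring
    obtain ⟨hnn, hzero⟩ := minKernel u huinj hupos (fun a => c a * f a)
    rw [hform]
    rcases lt_or_eq_of_le hnn with h | h
    · exact h
    · exfalso
      apply hc
      have hd := hzero h.symm
      funext a
      have := congrFun hd a
      have hfa : f a ≠ 0 := Real.exp_ne_zero _
      simpa [hfa] using this

end Kernel

end Aux

theorem stmt8 {N : ℕ} (F : Finset (Fin N → ℝ)) (hF : F.Nonempty)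
    (hskew : IsSkew (F : Set (Fin N → ℝ)))
    (r : ℝ) (hr : 0 < r)
    (hr' : ENNReal.ofReal (2 * r) < skewness (F : Set (Fin N → ℝ))) :
    -- the `2^N · |F|` vertices are pairwise distinct
    (∀ p ∈ F, ∀ p' ∈ F, ∀ s s' : Fin N → Bool,
        p + r • sgnVec s = p' + r • sgnVec s' → p = p' ∧ s = s') ∧
    -- the coefficient matrix of the Vertex System, i.e. the similarity matrix of the
    -- vertex set, is positive definite
    (Matrix.of fun a b : {p // p ∈ F} × (Fin N → Bool) =>
        Real.exp (-d1 ((a.1 : Fin N → ℝ) + r • sgnVec a.2)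
          ((b.1 : Fin N → ℝ) + r • sgnVec b.2))).PosDef ∧
    -- consequently, the Vertex System has a unique solution
    (∃ x, VertexSystem F r x) ∧
    (∀ x y, VertexSystem F r x → VertexSystem F r y → ∀ p ∈ F, ∀ s : Fin N → Bool,
        x p s = y p s) := by
  have hsep : ∀ p ∈ F, ∀ p' ∈ F, p ≠ p' → ∀ k, 2 * r < |p k - p' k| := by
    intro p hp p' hp' hne k
    have h1 : skewness (F : Set (Fin N → ℝ)) ≤ ENNReal.ofReal |p k - p' k| := by
      refine le_trans (iInf_le _ (⟨p, hp⟩ : (F : Set (Fin N → ℝ)))) ?_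
      refine le_trans (iInf_le _ (⟨p', hp'⟩ : (F : Set (Fin N → ℝ)))) ?_
      refine le_trans (iInf_le _ (fun h => hne (congrArg Subtype.val h))) ?_
      exact iInf_le _ k
    exact (ENNReal.ofReal_lt_ofReal_iff_of_nonneg (by positivity)).mp (lt_of_lt_of_le hr' h1)
  have part1 : ∀ p ∈ F, ∀ p' ∈ F, ∀ s s' : Fin N → Bool,
      p + r • sgnVec s = p' + r • sgnVec s' → p = p' ∧ s = s' := by
    intro p hp p' hp' s s' h
    have hk : ∀ k, p k + r * sgnVec s k = p' k + r * sgnVec s' k := by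
      intro k
      have := congrFun h k
      simpa [Pi.add_apply, Pi.smul_apply, smul_eq_mul] using this
    have hpp : p = p' := by
      by_contra hne
      rcases Nat.eq_zero_or_pos N with hN | hN
      · exact hne (funext fun k => absurd (k.2.trans_eq hN) (Nat.not_lt_zero _))
      have k : Fin N := ⟨0, hN⟩
      have hbig := hsep p hp p' hp' hne k
      have e := hk k
      rcases abs_cases (p k - p' k) with ⟨ha, _⟩ | ⟨ha, _⟩ <;>
        cases hs : s k <;> cases hs' : s' k <;>
          simp [sgnVec, hs, hs'] at e <;> rw [ha] at hbig <;> linarith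
    refine ⟨hpp, ?_⟩
    funext k
    have e := hk k
    rw [hpp] at e
    have e2 : r * sgnVec s k = r * sgnVec s' k := by linarith
    have e3 : sgnVec s k = sgnVec s' k := mul_left_cancel₀ (ne_of_gt hr) e2
    cases hs : s k <;> cases hs' : s' k <;> simp [sgnVec, hs, hs'] at e3 ⊢ <;> linarith
  -- injectivity of vertex map
  set v : ({p // p ∈ F} × (Fin N → Bool)) → (Fin N → ℝ) :=
    fun a => (a.1 : Fin N → ℝ) + r • sgnVec a.2 with hv'
  have hvinj : Function.Injective v := by
    rintro ⟨⟨p, hp⟩, s⟩ ⟨⟨p', hp'⟩, s'⟩ hab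
    obtain ⟨h1, h2⟩ := part1 p hp p' hp' s s' hab
    simp [Prod.ext_iff, Subtype.ext_iff, h1, h2]
  have part2 : (Matrix.of fun a b : {p // p ∈ F} × (Fin N → Bool) =>
      Real.exp (-d1 ((a.1 : Fin N → ℝ) + r • sgnVec a.2)
        ((b.1 : Fin N → ℝ) + r • sgnVec b.2))).PosDef := l1exp_posDef v hvinj
  set A : Matrix ({p // p ∈ F} × (Fin N → Bool)) ({p // p ∈ F} × (Fin N → Bool)) ℝ :=
    Matrix.of fun a b => Real.exp (-d1 ((a.1 : Fin N → ℝ) + r • sgnVec a.2)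
      ((b.1 : Fin N → ℝ) + r • sgnVec b.2)) with hA'
  have hA : A.PosDef := part2
  have hdet : IsUnit A.det := isUnit_iff_ne_zero.mpr (ne_of_gt hA.det_pos)
  have hsymm : ∀ i j, A i j = A j i := by
    intro i j
    have := congrFun (congrFun hA.1 i) j
    simpa using this.symm
  have sum_conv : ∀ (f : (p : Fin N → ℝ) → (p ∈ F) → (Fin N → Bool) → ℝ),
      (∑ i : {p // p ∈ F} × (Fin N → Bool), f i.1.1 i.1.2 i.2)
        = ∑ p ∈ F.attach, ∑ s : Fin N → Bool, f p.1 p.2 s := by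
    intro f
    rw [Fintype.sum_prod_type, Finset.univ_eq_attach]
  have key : ∀ c : ({p // p ∈ F} × (Fin N → Bool)) → ℝ, ∀ q (hq : q ∈ F), ∀ t,
      (∑ p ∈ F, ∑ s : Fin N → Bool,
        (if h : p ∈ F then c (⟨p, h⟩, s) else 0) *
          Real.exp (-d1 (p + r • sgnVec s) (q + r • sgnVec t)))
      = (A.mulVec c) (⟨q, hq⟩, t) := by
    intro c q hq t
    rw [← Finset.sum_attach F (fun p => ∑ s : Fin N → Bool,
      (if h : p ∈ F then c (⟨p, h⟩, s) else 0) *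
        Real.exp (-d1 (p + r • sgnVec s) (q + r • sgnVec t)))]
    rw [show (A.mulVec c) (⟨q, hq⟩, t)
        = ∑ i : {p // p ∈ F} × (Fin N → Bool), c i * A i (⟨q, hq⟩, t) by
      simp only [Matrix.mulVec, dotProduct]
      exact Finset.sum_congr rfl fun i _ => by rw [mul_comm]; exact congrArg (c i * ·) (hsymm (⟨q,hq⟩,t) i)]
    rw [sum_conv (fun p hp s => c (⟨p, hp⟩, s) * A (⟨p, hp⟩, s) (⟨q, hq⟩, t))]
    refine Finset.sum_congr rfl fun p _ => Finset.sum_congr rfl fun s _ => ?_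
    rw [dif_pos p.2]
    rfl
  refine ⟨part1, part2, ?_, ?_⟩
  · -- existence
    set b : ({p // p ∈ F} × (Fin N → Bool)) → ℝ := fun i =>
      ∑ p ∈ F.erase i.1.1, Real.exp (-d1Inf (cube p r) ((i.1.1 : Fin N → ℝ) + r • sgnVec i.2))
      with hb'
    refine ⟨fun p s => if h : p ∈ F then (A⁻¹.mulVec b) (⟨p, h⟩, s) else 0, ?_⟩
    intro q hq t
    rw [key (A⁻¹.mulVec b) q hq t]
    rw [Matrix.mulVec_mulVec, Matrix.mul_nonsing_inv A hdet, Matrix.one_mulVec]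
  · -- uniqueness
    intro x y hx hy
    set z : ({p // p ∈ F} × (Fin N → Bool)) → ℝ := fun i => x i.1.1 i.2 - y i.1.1 i.2 with hz'
    have hAz : A.mulVec z = 0 := by
      funext j
      obtain ⟨⟨q, hq⟩, t⟩ := j
      have ex : ∀ (w : (Fin N → ℝ) → (Fin N → Bool) → ℝ), VertexSystem F r w →
          (A.mulVec fun i => w i.1.1 i.2) (⟨q, hq⟩, t)
            = ∑ p ∈ F.erase q, Real.exp (-d1Inf (cube p r) (q + r • sgnVec t)) := by
        intro w hw
        rw [← key (fun i => w i.1.1 i.2) q hq t]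
        rw [← hw q hq t]
        refine Finset.sum_congr rfl fun p hp => Finset.sum_congr rfl fun s _ => ?_
        rw [dif_pos hp]
      have hzxy : z = (fun i => x i.1.1 i.2) - (fun i => y i.1.1 i.2) := rfl
      rw [hzxy, Matrix.mulVec_sub]
      simp only [Pi.sub_apply, Pi.zero_apply]
      rw [ex x hx, ex y hy, sub_self]
    have hz0 : z = 0 := by
      by_contra hzne
      have := hA.dotProduct_mulVec_pos hzne
      rw [hAz] at this
      simp [dotProduct_zero] at this
    intro p hp s
    have := congrFun hz0 (⟨p, hp⟩, s)
    simpa [hz', sub_eq_zero] using this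
end

section
/- Let N ∈ ℕ, let F be a nonempty skew finite subset of ℓ1^N, let r ∈ (0, skew(F)/2), and let (α_{p,s}(r))_{p∈F, s∈{−1,1}^N} be the unique solution of the Vertex System. Then for every q ∈ F and every t ∈ [−1,1]^N, (1/2^N) Σ_{p∈F} ∫_{ℝ^N} e^{−d1(x, q+rt)} dμ_{p,r}(x) − Σ_{p∈F, s∈{−1,1}^N} α_{p,s}(r) e^{−d1(p+rs, q+rt)} = 1. (Since every point of C̄_F(r) has the form q + rt with q ∈ F and t ∈ [−1,1]^N, this says that the signed measure (1/2^N) Σ_p μ_{p,r} − Σ_{p,s} α_{p,s}(r) δ_{p+rs} is a weight measure of C̄_F(r).) -/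
open MeasureTheory Metric Set Filter Topology
open scoped ENNReal Classical

noncomputable def wA (r u : ℝ) : ℝ :=
  (Real.exp (r*u) * Real.exp r - Real.exp (-(r*u)) * Real.exp (-r)) /
    (Real.exp (2*r) - Real.exp (-(2*r)))
noncomputable def wB (r u : ℝ) : ℝ :=
  (Real.exp (-(r*u)) * Real.exp r - Real.exp (r*u) * Real.exp (-r)) /
    (Real.exp (2*r) - Real.exp (-(2*r)))

lemma den_ne (r : ℝ) (hr : 0 < r) : Real.exp (2*r) - Real.exp (-(2*r)) ≠ 0 := by
  have : Real.exp (-(2*r)) < Real.exp (2*r) := Real.exp_lt_exp.2 (by linarith)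
  linarith

lemma wA_spec (r u : ℝ) (hr : 0 < r) :
    wA r u * Real.exp r + wB r u * Real.exp (-r) = Real.exp (r*u) := by
  have h := den_ne r hr
  rw [wA, wB, div_mul_eq_mul_div, div_mul_eq_mul_div, ← add_div, div_eq_iff h,
    show (2:ℝ)*r = r + r by ring, Real.exp_add, show -(r+r) = -r + -r by ring, Real.exp_add]
  ring_nf

lemma wB_spec (r u : ℝ) (hr : 0 < r) :
    wA r u * Real.exp (-r) + wB r u * Real.exp r = Real.exp (-(r*u)) := by
  have h := den_ne r hr
  rw [wA, wB, div_mul_eq_mul_div, div_mul_eq_mul_div, ← add_div, div_eq_iff h,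
    show (2:ℝ)*r = r + r by ring, Real.exp_add, show -(r+r) = -r + -r by ring, Real.exp_add]
  ring_nf

lemma interp1 (r : ℝ) (hr : 0 < r) (u : ℝ) (hu : u ∈ Set.Icc (-1:ℝ) 1) (c : ℝ)
    (hc : r ≤ |c|) :
    Real.exp (-|c - r*u|) =
      wA r u * Real.exp (-|c - r|) + wB r u * Real.exp (-|c + r|) := by
  obtain ⟨hu1, hu2⟩ := hu
  have hru : r * u ≤ r := by nlinarith
  have hru' : -r ≤ r * u := by nlinarith
  rcases le_abs.mp hc with h | h
  · -- r ≤ c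
    rw [abs_of_nonneg (by linarith : (0:ℝ) ≤ c - r*u),
        abs_of_nonneg (by linarith : (0:ℝ) ≤ c - r),
        abs_of_nonneg (by linarith : (0:ℝ) ≤ c + r)]
    have e1 : Real.exp (-(c - r*u)) = Real.exp (r*u) * Real.exp (-c) := by
      rw [← Real.exp_add]; ring_nf
    have e2 : Real.exp (-(c - r)) = Real.exp r * Real.exp (-c) := by
      rw [← Real.exp_add]; ring_nf
    have e3 : Real.exp (-(c + r)) = Real.exp (-r) * Real.exp (-c) := by
      rw [← Real.exp_add]; ring_nf
    rw [e1, e2, e3, ← wA_spec r u hr]; ring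
  · -- r ≤ -c
    rw [abs_of_nonpos (by linarith : c - r*u ≤ 0),
        abs_of_nonpos (by linarith : c - r ≤ 0),
        abs_of_nonpos (by linarith : c + r ≤ 0)]
    have e1 : Real.exp (-(-(c - r*u))) = Real.exp (-(r*u)) * Real.exp c := by
      rw [← Real.exp_add]; ring_nf
    have e2 : Real.exp (-(-(c - r))) = Real.exp (-r) * Real.exp c := by
      rw [← Real.exp_add]; ring_nf
    have e3 : Real.exp (-(-(c + r))) = Real.exp r * Real.exp c := by
      rw [← Real.exp_add]; ring_nf
    rw [e1, e2, e3, ← wB_spec r u hr]; ring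

lemma interpN {N : ℕ} (r : ℝ) (hr : 0 < r) (t : Fin N → ℝ)
    (ht : ∀ k, t k ∈ Set.Icc (-1:ℝ) 1)
    (γ : Fin N → ℝ) (hγ : ∀ k, r ≤ |γ k|) :
    Real.exp (-∑ k, |γ k - r * t k|) =
      ∑ τ : Fin N → Bool, (∏ k, (if τ k then wA r (t k) else wB r (t k))) *
        Real.exp (-∑ k, |γ k - r * sgnVec τ k|) := by
  have expand : ∀ (u : Fin N → ℝ),
      Real.exp (-∑ k, |γ k - r * u k|) = ∏ k, Real.exp (-|γ k - r * u k|) := by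
    intro u
    rw [← Real.exp_sum, ← Finset.sum_neg_distrib]
  rw [expand]
  have step : ∀ k : Fin N, Real.exp (-|γ k - r * t k|) =
      ∑ b : Bool, (if b then wA r (t k) else wB r (t k)) *
        Real.exp (-|γ k - r * (if b then (1:ℝ) else -1)|) := by
    intro k
    rw [Fintype.sum_bool]
    simp only [Bool.false_eq_true, if_true, if_false, mul_one, mul_neg_one]
    rw [interp1 r hr (t k) (ht k) (γ k) (hγ k)]
    ring_nf
  calc ∏ k, Real.exp (-|γ k - r * t k|)
      = ∏ k, ∑ b : Bool, (if b then wA r (t k) else wB r (t k)) *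
          Real.exp (-|γ k - r * (if b then (1:ℝ) else -1)|) := by
        exact Finset.prod_congr rfl fun k _ => step k
    _ = ∑ τ : Fin N → Bool, ∏ k, ((if τ k then wA r (t k) else wB r (t k)) *
          Real.exp (-|γ k - r * (if τ k then (1:ℝ) else -1)|)) := Fintype.prod_sum _
    _ = ∑ τ : Fin N → Bool, (∏ k, (if τ k then wA r (t k) else wB r (t k))) *
        Real.exp (-∑ k, |γ k - r * sgnVec τ k|) := by
        refine Finset.sum_congr rfl fun τ _ => ?_
        rw [Finset.prod_mul_distrib, expand (sgnVec τ)]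
        rfl

lemma cont_expabs (y : ℝ) : Continuous (fun u : ℝ => Real.exp (-|u - y|)) := by
  fun_prop

lemma integrable_expabs (y : ℝ) (μ : Measure ℝ) [IsFiniteMeasure μ] :
    Integrable (fun u => Real.exp (-|u - y|)) μ := by
  refine Integrable.mono' (integrable_const 1) (cont_expabs y).aestronglyMeasurable ?_
  filter_upwards with u
  rw [Real.norm_eq_abs, abs_of_pos (Real.exp_pos _)]
  exact Real.exp_le_one_iff.2 (neg_nonpos.2 (abs_nonneg _))

lemma I_left (a b y : ℝ) (hya : y ≤ a) (hab : a ≤ b) :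
    ∫ u in a..b, Real.exp (-|u - y|) = Real.exp (y - a) - Real.exp (y - b) := by
  have : ∀ u ∈ Set.uIcc a b, Real.exp (-|u - y|) = Real.exp (y - u) := by
    intro u hu
    rw [Set.uIcc_of_le hab] at hu
    rw [abs_of_nonneg (by linarith [hu.1] : (0:ℝ) ≤ u - y)]
    ring_nf
  rw [intervalIntegral.integral_congr this]
  have := intervalIntegral.integral_comp_sub_left (a := a) (b := b) Real.exp y
  rw [this, integral_exp]

lemma I_right (a b y : ℝ) (hby : b ≤ y) (hab : a ≤ b) :
    ∫ u in a..b, Real.exp (-|u - y|) = Real.exp (b - y) - Real.exp (a - y) := by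
  have : ∀ u ∈ Set.uIcc a b, Real.exp (-|u - y|) = Real.exp (u - y) := by
    intro u hu
    rw [Set.uIcc_of_le hab] at hu
    rw [abs_of_nonpos (by linarith [hu.2] : u - y ≤ 0)]
    ring_nf
  rw [intervalIntegral.integral_congr this]
  have := intervalIntegral.integral_comp_sub_right (a := a) (b := b) Real.exp y
  rw [this, integral_exp]

lemma I_mid (a b y : ℝ) (hay : a ≤ y) (hyb : y ≤ b) :
    ∫ u in a..b, Real.exp (-|u - y|) = 2 - Real.exp (a - y) - Real.exp (y - b) := by
  have h1 : IntervalIntegrable (fun u : ℝ => Real.exp (-|u - y|)) volume a y :=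
    (cont_expabs y).intervalIntegrable _ _
  have h2 : IntervalIntegrable (fun u : ℝ => Real.exp (-|u - y|)) volume y b :=
    (cont_expabs y).intervalIntegrable _ _
  rw [← intervalIntegral.integral_add_adjacent_intervals h1 h2,
      I_right a y y le_rfl hay, I_left y b y le_rfl hyb]
  simp
  ring

noncomputable def nu (a b : ℝ) : Measure ℝ :=
  Measure.dirac a + Measure.dirac b + volume.restrict (Set.Icc a b)

instance nu_finite (a b : ℝ) : IsFiniteMeasure (nu a b) := by
  have : IsFiniteMeasure (volume.restrict (Set.Icc a b)) :=
    ⟨by rw [Measure.restrict_apply_univ]; exact measure_Icc_lt_top⟩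
  unfold nu
  infer_instance

lemma nu_integral (a b y : ℝ) (hab : a ≤ b) :
    ∫ u, Real.exp (-|u - y|) ∂(nu a b) =
      Real.exp (-|a - y|) + Real.exp (-|b - y|) + ∫ u in a..b, Real.exp (-|u - y|) := by
  have hfin : IsFiniteMeasure (volume.restrict (Set.Icc a b)) :=
    ⟨by rw [Measure.restrict_apply_univ]; exact measure_Icc_lt_top⟩
  unfold nu
  rw [integral_add_measure (integrable_expabs y _) (integrable_expabs y _),
      integral_add_measure (integrable_expabs y _) (integrable_expabs y _),
      integral_dirac, integral_dirac]
  congr 1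
  rw [MeasureTheory.integral_Icc_eq_integral_Ioc, ← intervalIntegral.integral_of_le hab]

lemma nu_integral_mid (a b y : ℝ) (hay : a ≤ y) (hyb : y ≤ b) :
    ∫ u, Real.exp (-|u - y|) ∂(nu a b) = 2 := by
  rw [nu_integral a b y (hay.trans hyb), I_mid a b y hay hyb,
      abs_of_nonpos (by linarith : a - y ≤ 0), abs_of_nonneg (by linarith : (0:ℝ) ≤ b - y)]
  ring_nf

lemma nu_integral_left (a b y : ℝ) (hya : y ≤ a) (hab : a ≤ b) :
    ∫ u, Real.exp (-|u - y|) ∂(nu a b) = 2 * Real.exp (y - a) := by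
  rw [nu_integral a b y hab, I_left a b y hya hab,
      abs_of_nonneg (by linarith : (0:ℝ) ≤ a - y),
      abs_of_nonneg (by linarith : (0:ℝ) ≤ b - y)]
  ring_nf

lemma nu_integral_right (a b y : ℝ) (hby : b ≤ y) (hab : a ≤ b) :
    ∫ u, Real.exp (-|u - y|) ∂(nu a b) = 2 * Real.exp (b - y) := by
  rw [nu_integral a b y hab, I_right a b y hby hab,
      abs_of_nonpos (by linarith : a - y ≤ 0),
      abs_of_nonpos (by linarith : b - y ≤ 0)]
  ring_nf

lemma my_integral_pi_prod : ∀ {n : ℕ} (μ : Fin n → Measure ℝ),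
    (∀ i, IsFiniteMeasure (μ i)) → ∀ (f : Fin n → ℝ → ℝ),
    ∫ x : Fin n → ℝ, ∏ i, f i (x i) ∂(Measure.pi μ) = ∏ i, ∫ x, f i x ∂(μ i) := by
  intro n
  induction n with
  | zero =>
      intro μ _ f
      rw [show (fun x : Fin 0 → ℝ => ∏ i, f i (x i)) = fun _ => 1 by
        funext x; simp]
      rw [integral_const]
      rw [Measure.real, MeasureTheory.Measure.pi_empty_univ]
      simp
  | succ n ih =>
      intro μ hμ f
      haveI : ∀ i, IsFiniteMeasure (μ i) := hμ
      haveI : ∀ i : Fin n, IsFiniteMeasure (μ i.succ) := fun i => hμ _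
      calc
        ∫ x : Fin (n+1) → ℝ, ∏ i, f i (x i) ∂(Measure.pi μ)
            = ∫ x : ℝ × (Fin n → ℝ),
                f 0 x.1 * ∏ i : Fin n, f i.succ (x.2 i)
                ∂((μ 0).prod (Measure.pi fun i => μ i.succ)) := by
              rw [← ((MeasureTheory.measurePreserving_piFinSuccAbove μ 0).symm).integral_comp']
              congr 1
              ext x
              simp [MeasurableEquiv.piFinSuccAbove_symm_apply, Fin.insertNthEquiv,
                Fin.prod_univ_succ, Fin.insertNth_zero, Fin.cons_succ,
                Fin.zero_succAbove, Fin.cons_zero]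
        _ = (∫ x, f 0 x ∂(μ 0)) * ∏ i : Fin n, ∫ x, f i.succ x ∂(μ i.succ) := by
              rw [← ih (fun i => μ i.succ) (fun i => hμ _) (fun i => f i.succ),
                  ← integral_prod_mul]
        _ = ∏ i, ∫ x, f i x ∂(μ i) := by rw [Fin.prod_univ_succ]

lemma d1Inf_eq {N : ℕ} (p q : Fin N → ℝ) (r : ℝ) (hr : 0 < r)
    (hpq : ∀ k, 2*r < |p k - q k|) (u : Fin N → ℝ) (hu : ∀ k, u k ∈ Set.Icc (-1:ℝ) 1) :
    d1Inf (cube p r) (q + r • u) =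
      ∑ k, |(p k - q k - (if q k < p k then r else -r)) - r * u k| := by
  classical
  set y : Fin N → ℝ := q + r • u with hy
  have hyk : ∀ k, y k = q k + r * u k := fun k => rfl
  set γ : Fin N → ℝ := fun k => p k - q k - (if q k < p k then r else -r) with hγ
  set z : Fin N → ℝ := fun k => if q k < p k then p k - r else p k + r with hz
  have hzc : z ∈ cube p r := by
    intro k
    by_cases h : q k < p k <;> simp only [hz, h, if_true, if_false] <;>
      exact ⟨by linarith, by linarith⟩
  have key : ∀ zz ∈ cube p r, ∀ k, |γ k - r * u k| ≤ |zz k - y k| := by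
    intro zz hzz k
    have h1 := (hzz k).1
    have h2 := (hzz k).2
    have hu1 := (hu k).1
    have hu2 := (hu k).2
    have hru : r * u k ≤ r := by nlinarith
    have hru' : -r ≤ r * u k := by nlinarith
    by_cases h : q k < p k
    · have hc : 2*r < p k - q k := by
        have := hpq k; rwa [abs_of_pos (by linarith)] at this
      have hpos : 0 < γ k - r * u k := by
        simp only [hγ, h, if_true]; linarith
      rw [abs_of_pos hpos, hyk k]
      have : γ k - r * u k ≤ zz k - (q k + r * u k) := by
        simp only [hγ, h, if_true]; linarith
      calc γ k - r * u k ≤ zz k - (q k + r * u k) := this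
        _ ≤ |zz k - (q k + r * u k)| := le_abs_self _
    · have hc : 2*r < q k - p k := by
        have := hpq k
        rw [abs_of_nonpos (by push_neg at h; linarith)] at this; linarith
      have hneg : γ k - r * u k < 0 := by
        simp only [hγ, h, if_false]; linarith
      rw [abs_of_neg hneg, hyk k]
      have : -(γ k - r * u k) ≤ (q k + r * u k) - zz k := by
        simp only [hγ, h, if_false]; linarith
      calc -(γ k - r * u k) ≤ (q k + r * u k) - zz k := this
        _ ≤ |zz k - (q k + r * u k)| := by rw [abs_sub_comm]; exact le_abs_self _
  have hzval : d1 z y = ∑ k, |γ k - r * u k| := by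
    unfold d1
    refine Finset.sum_congr rfl fun k _ => ?_
    rw [hyk k]
    by_cases h : q k < p k <;> simp only [hz, hγ, h, if_true, if_false] <;> ring_nf
  have hmem : d1 z y ∈ (fun zz => d1 zz y) '' (cube p r) := ⟨z, hzc, rfl⟩
  have hbdd : BddBelow ((fun zz => d1 zz y) '' (cube p r)) := by
    refine ⟨0, fun w hw => ?_⟩
    obtain ⟨zz, _, rfl⟩ := hw
    exact Finset.sum_nonneg fun k _ => abs_nonneg _
  refine le_antisymm ?_ ?_
  · rw [← hzval]
    exact csInf_le hbdd hmem
  · refine le_csInf ⟨_, hmem⟩ ?_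
    rintro w ⟨zz, hzz, rfl⟩
    exact Finset.sum_le_sum fun k _ => key zz hzz k

lemma cubeMeasure_eq {N : ℕ} (p : Fin N → ℝ) (r : ℝ) :
    cubeMeasure p r = Measure.pi fun k => nu (p k - r) (p k + r) := rfl

lemma cubeMeasure_integral {N : ℕ} (p : Fin N → ℝ) (r : ℝ) (y : Fin N → ℝ) :
    ∫ x, Real.exp (-d1 x y) ∂(cubeMeasure p r) =
      ∏ k, ∫ u, Real.exp (-|u - y k|) ∂(nu (p k - r) (p k + r)) := by
  have h : (fun x : Fin N → ℝ => Real.exp (-d1 x y)) =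
      fun x => ∏ k, Real.exp (-|x k - y k|) := by
    funext x
    unfold d1
    rw [← Real.exp_sum, ← Finset.sum_neg_distrib]
  rw [cubeMeasure_eq, h]
  exact my_integral_pi_prod (fun k => nu (p k - r) (p k + r)) (fun k => nu_finite _ _)
    (fun k u => Real.exp (-|u - y k|))

theorem stmt10 {N : ℕ} (F : Finset (Fin N → ℝ)) (hF : F.Nonempty)
    (hskew : IsSkew (F : Set (Fin N → ℝ)))
    (r : ℝ) (hr : 0 < r)
    (hr' : ENNReal.ofReal (2 * r) < skewness (F : Set (Fin N → ℝ)))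
    (α : (Fin N → ℝ) → (Fin N → Bool) → ℝ) (hα : VertexSystem F r α)
    (q : Fin N → ℝ) (hq : q ∈ F)
    (t : Fin N → ℝ) (ht : ∀ k, t k ∈ Set.Icc (-1 : ℝ) 1) :
    (1 / 2 ^ N) * (∑ p ∈ F, ∫ x, Real.exp (-d1 x (q + r • t)) ∂(cubeMeasure p r)) -
      (∑ p ∈ F, ∑ s : Fin N → Bool,
        α p s * Real.exp (-d1 (p + r • sgnVec s) (q + r • t))) = 1 := by
  classical
  -- skew separation
  have hsep : ∀ p ∈ F, p ≠ q → ∀ k, 2 * r < |p k - q k| := by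
    intro p hp hpq k
    have hne : (⟨p, Finset.mem_coe.2 hp⟩ : (F : Set (Fin N → ℝ))) ≠ ⟨q, Finset.mem_coe.2 hq⟩ := by
      simp [hpq]
    have h1 : skewness (F : Set (Fin N → ℝ)) ≤ ENNReal.ofReal |p k - q k| := by
      unfold skewness
      exact iInf_le_of_le ⟨p, Finset.mem_coe.2 hp⟩ (iInf_le_of_le ⟨q, Finset.mem_coe.2 hq⟩
        (iInf_le_of_le hne (iInf_le _ k)))
    have h2 := lt_of_lt_of_le hr' h1
    rwa [ENNReal.ofReal_lt_ofReal_iff_of_nonneg (by linarith)] at h2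
  set γB : (Fin N → ℝ) → Fin N → ℝ :=
    fun p k => p k - q k - (if q k < p k then r else -r) with hγB
  have hsgn_mem : ∀ (τ : Fin N → Bool) (k : Fin N), sgnVec τ k ∈ Set.Icc (-1:ℝ) 1 := by
    intro τ k
    by_cases h : τ k <;> simp [sgnVec, h]
  -- rewriting d1 at shifted vertices
  have hA : ∀ (p : Fin N → ℝ) (s : Fin N → Bool) (u : Fin N → ℝ),
      d1 (p + r • sgnVec s) (q + r • u) =
        ∑ k, |(p k + r * sgnVec s k - q k) - r * u k| := by
    intro p s u
    unfold d1
    refine Finset.sum_congr rfl fun k _ => ?_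
    simp only [Pi.add_apply, Pi.smul_apply, smul_eq_mul]
    congr 1
    ring
  -- bounds
  have hγA_bd : ∀ p ∈ F, ∀ (s : Fin N → Bool) (k : Fin N),
      r ≤ |p k + r * sgnVec s k - q k| := by
    intro p hp s k
    have hs : |r * sgnVec s k| = r := by
      by_cases h : s k <;> simp [sgnVec, h, abs_of_pos hr] <;> rw [abs_of_pos hr]
    by_cases hpq : p = q
    · subst hpq
      have harg : p k + r * sgnVec s k - p k = r * sgnVec s k := by ring
      rw [harg, hs]
    · have h1 := hsep p hp hpq k
      have : |p k - q k| - |r * sgnVec s k| ≤ |p k + r * sgnVec s k - q k| := by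
        calc |p k - q k| - |r * sgnVec s k| ≤ |(p k - q k) + r * sgnVec s k| := by
              have := abs_add_le (p k + r * sgnVec s k - q k) (-(r * sgnVec s k))
              simp only [abs_neg] at this
              have h2 : p k + r * sgnVec s k - q k + -(r * sgnVec s k) = p k - q k := by ring
              rw [h2] at this
              have h3 : (p k - q k) + r * sgnVec s k = p k + r * sgnVec s k - q k := by ring
              rw [h3]
              linarith
          _ = |p k + r * sgnVec s k - q k| := by congr 1; ring
      rw [hs] at this
      linarith
  have hγB_bd : ∀ p ∈ F, p ≠ q → ∀ k, r ≤ |γB p k| := by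
    intro p hp hpq k
    have h1 := hsep p hp hpq k
    by_cases h : q k < p k
    · have : 2*r < p k - q k := by rwa [abs_of_pos (by linarith)] at h1
      simp only [hγB, h, if_true]
      rw [abs_of_pos (by linarith)]
      linarith
    · push_neg at h
      have : 2*r < q k - p k := by
        rw [abs_of_nonpos (by linarith)] at h1; linarith
      simp only [hγB, if_neg (not_lt.2 h)]
      rw [abs_of_neg (by linarith)]
      linarith
  -- integral values
  have hint : ∀ p ∈ F, ∫ x, Real.exp (-d1 x (q + r • t)) ∂(cubeMeasure p r) =
      if p = q then 2^N else 2^N * Real.exp (-∑ k, |γB p k - r * t k|) := by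
    intro p hp
    rw [cubeMeasure_integral]
    have hyk : ∀ k, (q + r • t) k = q k + r * t k := fun k => rfl
    by_cases hpq : p = q
    · subst hpq
      rw [if_pos rfl]
      have : ∀ k : Fin N, ∫ u, Real.exp (-|u - (p + r • t) k|) ∂(nu (p k - r) (p k + r)) = 2 := by
        intro k
        rw [hyk k]
        have hu1 := (ht k).1
        have hu2 := (ht k).2
        exact nu_integral_mid _ _ _ (by nlinarith) (by nlinarith)
      rw [Finset.prod_congr rfl fun k _ => this k]
      simp
    · rw [if_neg hpq]
      have hfac : ∀ k : Fin N, ∫ u, Real.exp (-|u - (q + r • t) k|) ∂(nu (p k - r) (p k + r)) =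
          2 * Real.exp (-|γB p k - r * t k|) := by
        intro k
        rw [hyk k]
        have h1 := hsep p hp hpq k
        have hu1 := (ht k).1
        have hu2 := (ht k).2
        have hru : r * t k ≤ r := by nlinarith
        have hru' : -r ≤ r * t k := by nlinarith
        by_cases h : q k < p k
        · have hc : 2*r < p k - q k := by rwa [abs_of_pos (by linarith)] at h1
          rw [nu_integral_left _ _ _ (by linarith) (by linarith)]
          congr 1
          rw [abs_of_pos (by simp only [hγB, h, if_true]; linarith)]
          simp only [hγB, h, if_true]
          ring
        · push_neg at h
          have hc : 2*r < q k - p k := by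
            rw [abs_of_nonpos (by linarith)] at h1; linarith
          rw [nu_integral_right _ _ _ (by linarith) (by linarith)]
          congr 1
          rw [abs_of_neg (by simp only [hγB, if_neg (not_lt.2 h)]; linarith)]
          simp only [hγB, if_neg (not_lt.2 h)]
          ring
      rw [Finset.prod_congr rfl fun k _ => hfac k, Finset.prod_mul_distrib]
      congr 1
      · simp
      · rw [← Real.exp_sum, ← Finset.sum_neg_distrib]
  -- key identity
  have key : (∑ p ∈ F, ∑ s : Fin N → Bool,
        α p s * Real.exp (-d1 (p + r • sgnVec s) (q + r • t))) =
      ∑ p ∈ F.erase q, Real.exp (-∑ k, |γB p k - r * t k|) := by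
    calc (∑ p ∈ F, ∑ s : Fin N → Bool,
            α p s * Real.exp (-d1 (p + r • sgnVec s) (q + r • t)))
        = ∑ p ∈ F, ∑ s : Fin N → Bool, ∑ τ : Fin N → Bool,
            (∏ k, (if τ k then wA r (t k) else wB r (t k))) * (α p s * Real.exp (-d1 (p + r • sgnVec s) (q + r • sgnVec τ))) := by
          refine Finset.sum_congr rfl fun p hp => Finset.sum_congr rfl fun s _ => ?_
          rw [hA p s t, interpN r hr t ht _ (hγA_bd p hp s)]
          rw [Finset.mul_sum]
          refine Finset.sum_congr rfl fun τ _ => ?_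
          rw [hA p s (sgnVec τ)]
          ring
      _ = ∑ τ : Fin N → Bool, (∏ k, (if τ k then wA r (t k) else wB r (t k))) * ∑ p ∈ F, ∑ s : Fin N → Bool,
            α p s * Real.exp (-d1 (p + r • sgnVec s) (q + r • sgnVec τ)) := by
          rw [Finset.sum_congr rfl fun p _ => Finset.sum_comm, Finset.sum_comm]
          refine Finset.sum_congr rfl fun τ _ => ?_
          rw [Finset.mul_sum]
          refine Finset.sum_congr rfl fun p _ => ?_
          rw [Finset.mul_sum]
      _ = ∑ τ : Fin N → Bool, (∏ k, (if τ k then wA r (t k) else wB r (t k))) * ∑ p ∈ F.erase q,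
            Real.exp (-∑ k, |γB p k - r * sgnVec τ k|) := by
          refine Finset.sum_congr rfl fun τ _ => ?_
          rw [hα q hq τ]
          congr 1
          refine Finset.sum_congr rfl fun p hp => ?_
          rw [d1Inf_eq p q r hr (hsep p (Finset.mem_of_mem_erase hp)
            (Finset.ne_of_mem_erase hp)) (sgnVec τ) (hsgn_mem τ)]
      _ = ∑ p ∈ F.erase q, ∑ τ : Fin N → Bool,
            (∏ k, (if τ k then wA r (t k) else wB r (t k))) * Real.exp (-∑ k, |γB p k - r * sgnVec τ k|) := by
          rw [Finset.sum_comm]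
          refine Finset.sum_congr rfl fun τ _ => ?_
          rw [Finset.mul_sum]
      _ = ∑ p ∈ F.erase q, Real.exp (-∑ k, |γB p k - r * t k|) := by
          refine Finset.sum_congr rfl fun p hp => ?_
          rw [interpN r hr t ht _ (hγB_bd p (Finset.mem_of_mem_erase hp)
            (Finset.ne_of_mem_erase hp))]
  -- assemble
  rw [key]
  rw [Finset.sum_congr rfl hint, ← Finset.add_sum_erase F _ hq, if_pos rfl]
  have herase : ∀ p ∈ F.erase q,
      (if p = q then (2:ℝ)^N else 2^N * Real.exp (-∑ k, |γB p k - r * t k|)) =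
        2^N * Real.exp (-∑ k, |γB p k - r * t k|) := by
    intro p hp
    rw [if_neg (Finset.ne_of_mem_erase hp)]
  rw [Finset.sum_congr rfl herase, ← Finset.mul_sum]
  have h2N : (2:ℝ)^N ≠ 0 := by positivity
  field_simp
  ring
end

section
/- Let N ∈ ℕ, let F be a nonempty skew finite subset of ℓ1^N with m := |F|, let w = (w_p)_{p∈F} be the weighting of F, and for r ∈ (0, skew(F)/2) let (α_{p,s}(r))_{p∈F, s∈{−1,1}^N} be the unique solution of the Vertex System. Then for every p ∈ F, lim_{r↘0} Σ_{s∈{−1,1}^N} α_{p,s}(r) = 1 − w_p; consequently lim_{r↘0} Σ_{p∈F, s∈{−1,1}^N} α_{p,s}(r) = m − mg(F). -/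
open Metric Set Filter Topology
open scoped ENNReal Classical

namespace Aux13
open Matrix

/-- coordinatewise sign of `p - q`. -/
noncomputable def eps {N : ℕ} (p q : Fin N → ℝ) (k : Fin N) : ℝ :=
  if q k < p k then 1 else if p k < q k then -1 else 0

/-- inner product of the sign pattern of `p-q` with a sign vector. -/
noncomputable def ip {N : ℕ} (p q : Fin N → ℝ) (s : Fin N → Bool) : ℝ :=
  ∑ k, eps p q k * sgnVec s k

/-- the boolean sign pattern of `p - q`. -/
noncomputable def sg {N : ℕ} (p q : Fin N → ℝ) : Fin N → Bool := fun k => decide (q k < p k)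

lemma eps_self {N : ℕ} (p : Fin N → ℝ) (k : Fin N) : eps p p k = 0 := by
  simp [eps]

lemma ip_self {N : ℕ} (p : Fin N → ℝ) (s : Fin N → Bool) : ip p p s = 0 := by
  simp [ip, eps_self]

lemma eps_eq_sgnVec_sg {N : ℕ} {p q : Fin N → ℝ} {k : Fin N} (h : p k ≠ q k) :
    eps p q k = sgnVec (sg p q) k := by
  rcases lt_or_gt_of_ne h with h' | h' <;>
    simp [eps, sg, sgnVec, h', if_neg (lt_asymm h'), not_lt_of_gt h']

lemma abs_sgnVec {N : ℕ} (s : Fin N → Bool) (k : Fin N) : |sgnVec s k| ≤ 1 := by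
  rcases Bool.eq_false_or_eq_true (s k) with h | h <;> simp [sgnVec, h]

lemma abs_add_eps {N : ℕ} (p q : Fin N → ℝ) (k : Fin N) (e : ℝ)
    (h : |e| < |p k - q k|) :
    |p k - q k + e| = |p k - q k| + eps p q k * e := by
  rcases lt_trichotomy (q k) (p k) with h' | h' | h'
  · have hd : 0 < p k - q k := by linarith
    rw [abs_of_pos hd] at h
    rw [eps, if_pos h', abs_of_pos (by rcases abs_lt.1 h with ⟨h1, h2⟩; linarith),
      abs_of_pos hd]; ring
  · exfalso; rw [h'] at h; simp at h; linarith [abs_nonneg e]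
  · have hd : p k - q k < 0 := by linarith
    rw [abs_of_neg hd] at h
    rw [eps, if_neg (not_lt_of_gt h'), if_pos h',
      abs_of_neg (by rcases abs_lt.1 h with ⟨h1, h2⟩; linarith), abs_of_neg hd]; ring

lemma d1_symm {N : ℕ} (p q : Fin N → ℝ) : d1 p q = d1 q p := by
  unfold d1; exact Finset.sum_congr rfl fun k _ => abs_sub_comm _ _

lemma d1_self {N : ℕ} (p : Fin N → ℝ) : d1 p p = 0 := by simp [d1]

lemma vertex_apply {N : ℕ} (p : Fin N → ℝ) (r : ℝ) (s : Fin N → Bool) (k : Fin N) :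
    (p + r • sgnVec s) k = p k + r * sgnVec s k := rfl

lemma d1_vertex_ne {N : ℕ} {p q : Fin N → ℝ} {r : ℝ} (hr : 0 ≤ r)
    (hsep : ∀ k, 2 * r < |p k - q k|) (s t : Fin N → Bool) :
    d1 (p + r • sgnVec s) (q + r • sgnVec t) = d1 p q + r * ip p q s - r * ip p q t := by
  unfold d1 ip
  have key : ∀ k : Fin N, |(p + r • sgnVec s) k - (q + r • sgnVec t) k|
      = |p k - q k| + (r * (eps p q k * sgnVec s k) - r * (eps p q k * sgnVec t k)) := by
    intro k
    have h1 : |r * sgnVec s k - r * sgnVec t k| < |p k - q k| := by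
      have hs := abs_le.1 (abs_sgnVec s k)
      have ht := abs_le.1 (abs_sgnVec t k)
      have := hsep k
      have : |r * sgnVec s k - r * sgnVec t k| ≤ 2 * r := by
        rw [abs_le]; constructor <;> nlinarith
      linarith [hsep k]
    have h2 : (p + r • sgnVec s) k - (q + r • sgnVec t) k
        = p k - q k + (r * sgnVec s k - r * sgnVec t k) := by
      rw [vertex_apply, vertex_apply]; ring
    rw [h2, abs_add_eps p q k _ h1]; ring
  rw [Finset.sum_congr rfl fun k _ => key k, Finset.sum_add_distrib,
    Finset.sum_sub_distrib, ← Finset.mul_sum, ← Finset.mul_sum]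
  ring

lemma d1_vertex_eq {N : ℕ} (q : Fin N → ℝ) {r : ℝ} (hr : 0 ≤ r) (s t : Fin N → Bool) :
    d1 (q + r • sgnVec s) (q + r • sgnVec t) = ∑ k, (if s k = t k then 0 else 2 * r) := by
  unfold d1
  refine Finset.sum_congr rfl fun k _ => ?_
  have h2 : (q + r • sgnVec s) k - (q + r • sgnVec t) k = r * (sgnVec s k - sgnVec t k) := by
    rw [vertex_apply, vertex_apply]; ring
  rw [h2]
  rcases Bool.eq_false_or_eq_true (s k) with h1 | h1 <;>
    rcases Bool.eq_false_or_eq_true (t k) with h3 | h3 <;>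
      simp [sgnVec, h1, h3, abs_mul, abs_of_nonneg hr] <;> norm_num <;> ring

lemma d1Inf_cube {N : ℕ} {p q : Fin N → ℝ} {r : ℝ} (hr : 0 < r)
    (hsep : ∀ k, 2 * r < |p k - q k|) (t : Fin N → Bool) :
    d1Inf (cube p r) (q + r • sgnVec t) = d1 p q - ((N : ℝ) * r + r * ip p q t) := by
  have habs : ∀ k, |p k - q k - r * sgnVec t k| = |p k - q k| - r * (eps p q k * sgnVec t k) := by
    intro k
    have h1 : |-(r * sgnVec t k)| < |p k - q k| := by
      rw [abs_neg, abs_mul, abs_of_nonneg hr.le]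
      have := mul_le_mul_of_nonneg_left (abs_sgnVec t k) hr.le
      have := hsep k; linarith
    have h2 := abs_add_eps p q k (-(r * sgnVec t k)) h1
    rw [show p k - q k + -(r * sgnVec t k) = p k - q k - r * sgnVec t k by ring] at h2
    rw [h2]; ring
  have hval : (∑ k, (|p k - q k| - r - r * (eps p q k * sgnVec t k)))
      = d1 p q - ((N : ℝ) * r + r * ip p q t) := by
    unfold d1 ip
    rw [Finset.mul_sum, Finset.sum_sub_distrib, Finset.sum_sub_distrib, Finset.sum_const,
      Finset.card_univ, Fintype.card_fin, nsmul_eq_mul]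
    ring
  rw [← hval]
  unfold d1Inf
  apply le_antisymm
  · apply csInf_le
    · refine ⟨0, fun b hb => ?_⟩
      obtain ⟨z, _, rfl⟩ := hb
      exact Finset.sum_nonneg fun k _ => abs_nonneg _
    · refine ⟨fun k => p k - r * eps p q k, fun k => ?_, ?_⟩
      · simp only [Set.mem_Icc]
        rcases lt_trichotomy (q k) (p k) with h' | h' | h'
        · rw [eps, if_pos h']; constructor <;> linarith
        · exact absurd (hsep k) (by rw [h', sub_self, abs_zero]; exact not_lt.2 (by positivity))
        · rw [eps, if_neg (not_lt_of_gt h'), if_pos h']; constructor <;> linarith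
      · unfold d1
        refine Finset.sum_congr rfl fun k _ => ?_
        have hexp : (fun k => p k - r * eps p q k) k - (q + r • sgnVec t) k
            = p k - q k - r * sgnVec t k - r * eps p q k := by
          rw [vertex_apply]; ring
        rw [hexp]
        rcases lt_trichotomy (q k) (p k) with h' | h' | h'
        · have he : eps p q k = 1 := by rw [eps, if_pos h']
          have hst := abs_le.1 (abs_sgnVec t k)
          have h2 := hsep k
          rw [abs_of_pos (by linarith)] at h2
          rw [he, abs_of_nonneg (by nlinarith), abs_of_pos (by linarith)]; ring
        · exact absurd (hsep k) (by rw [h', sub_self, abs_zero]; exact not_lt.2 (by positivity))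
        · have he : eps p q k = -1 := by rw [eps, if_neg (not_lt_of_gt h'), if_pos h']
          have hst := abs_le.1 (abs_sgnVec t k)
          have h2 := hsep k
          rw [abs_of_neg (by linarith)] at h2
          rw [he, abs_of_nonpos (by nlinarith), abs_of_neg (by linarith)]; ring
  · apply le_csInf
    · refine ⟨d1 p (q + r • sgnVec t), ⟨p, fun k => ?_, rfl⟩⟩
      simp only [Set.mem_Icc]; constructor <;> linarith
    · rintro b ⟨z, hz, rfl⟩
      unfold d1
      refine Finset.sum_le_sum fun k _ => ?_
      have hz' := (Set.mem_Icc.1 (hz k))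
      have h4 : |p k - q k - r * sgnVec t k| ≤ |z k - (q + r • sgnVec t) k| + r := by
        have h5 : p k - q k - r * sgnVec t k = (z k - (q + r • sgnVec t) k) + (p k - z k) := by
          rw [vertex_apply]; ring
        rw [h5]
        have h6 := abs_add_le (z k - (q + r • sgnVec t) k) (p k - z k)
        have h7 : |p k - z k| ≤ r := by rw [abs_le]; constructor <;> linarith
        linarith
      have := habs k
      linarith


/-- the within-cube vertex kernel matrix -/
noncomputable def Mmat {N : ℕ} (r : ℝ) (t s : Fin N → Bool) : ℝ :=
  ∏ k, (if s k = t k then 1 else Real.exp (-(2 * r)))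

/-- its explicit inverse -/
noncomputable def Wmat {N : ℕ} (r : ℝ) (t s : Fin N → Bool) : ℝ :=
  ∏ k, ((if s k = t k then 1 else -Real.exp (-(2 * r))) / (1 - Real.exp (-(2 * r)) ^ 2))

lemma exp_d1_vertex_eq {N : ℕ} (q : Fin N → ℝ) {r : ℝ} (hr : 0 ≤ r) (s t : Fin N → Bool) :
    Real.exp (-d1 (q + r • sgnVec s) (q + r • sgnVec t)) = Mmat r t s := by
  rw [d1_vertex_eq q hr s t, ← Finset.sum_neg_distrib, Real.exp_sum, Mmat]
  refine Finset.prod_congr rfl fun k _ => ?_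
  by_cases h : s k = t k <;> simp [h]

lemma Wmat_mul_Mmat {N : ℕ} {r : ℝ} (hr : 0 < r) (t u : Fin N → Bool) :
    ∑ s : Fin N → Bool, Wmat r t s * Mmat r s u = if t = u then 1 else 0 := by
  set ρ := Real.exp (-(2 * r)) with hρ
  have hρ1 : ρ < 1 := by
    rw [hρ, Real.exp_lt_one_iff]; linarith
  have hρ0 : 0 < ρ := Real.exp_pos _
  have hρ2 : 1 - ρ ^ 2 ≠ 0 := by nlinarith
  have key : ∀ s : Fin N → Bool, Wmat r t s * Mmat r s u
      = ∏ k, (((if s k = t k then 1 else -ρ) / (1 - ρ ^ 2)) * (if u k = s k then 1 else ρ)) := by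
    intro s
    rw [Wmat, Mmat, ← Finset.prod_mul_distrib]
  rw [Finset.sum_congr rfl fun s _ => key s]
  rw [← Fintype.prod_sum fun k b => (((if b = t k then 1 else -ρ) / (1 - ρ ^ 2)) *
      (if u k = b then 1 else ρ))]
  have keyk : ∀ k : Fin N, (∑ b : Bool, (((if b = t k then 1 else -ρ) / (1 - ρ ^ 2)) *
      (if u k = b then 1 else ρ))) = if t k = u k then 1 else 0 := by
    intro k
    rw [Fintype.sum_bool]
    rcases Bool.eq_false_or_eq_true (t k) with h1 | h1 <;>
      rcases Bool.eq_false_or_eq_true (u k) with h2 | h2 <;>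
        simp [h1, h2] <;> field_simp <;> ring
  rw [Finset.prod_congr rfl fun k _ => keyk k]
  by_cases h : t = u
  · simp [h]
  · obtain ⟨k, hk⟩ := Function.ne_iff.1 h
    rw [if_neg h]
    exact Finset.prod_eq_zero (Finset.mem_univ k) (if_neg hk)


lemma Mmat_at_sg {N : ℕ} {p q : Fin N → ℝ} (r : ℝ) (hsep : ∀ k, p k ≠ q k) (t : Fin N → Bool) :
    Mmat r t (sg p q) = Real.exp (-((N : ℝ) * r)) * Real.exp (r * ip p q t) := by
  rw [← Real.exp_add]
  have h1 : -((N : ℝ) * r) + r * ip p q t = ∑ k, (-r + r * (eps p q k * sgnVec t k)) := by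
    rw [ip, Finset.mul_sum, Finset.sum_add_distrib, Finset.sum_const, Finset.card_univ,
      Fintype.card_fin, nsmul_eq_mul]
    ring
  rw [h1, Real.exp_sum, Mmat]
  refine Finset.prod_congr rfl fun k _ => ?_
  rcases lt_or_gt_of_ne (hsep k) with h' | h' <;>
    rcases Bool.eq_false_or_eq_true (t k) with h2 | h2 <;>
      simp [sg, eps, sgnVec, h', not_lt_of_gt h', if_neg (lt_asymm h'), h2] <;> ring

noncomputable def Avec {N : ℕ} (r : ℝ) (α : (Fin N → ℝ) → (Fin N → Bool) → ℝ)
    (p q : Fin N → ℝ) : ℝ :=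
  ∑ s : Fin N → Bool, Real.exp (-(r * ip p q s)) * α p s

lemma alpha_formula {N : ℕ} {F : Finset (Fin N → ℝ)} {r : ℝ} (hr : 0 < r)
    (hsep : ∀ p ∈ F, ∀ q ∈ F, p ≠ q → ∀ k, 2 * r < |p k - q k|)
    {α : (Fin N → ℝ) → (Fin N → Bool) → ℝ} (hα : VertexSystem F r α) :
    ∀ q ∈ F, ∀ t : Fin N → Bool,
      α q t = ∑ p ∈ F.erase q, Real.exp (-d1 p q) * Real.exp ((N : ℝ) * r) *
        (Real.exp ((N : ℝ) * r) - Avec r α p q) * (if sg p q = t then 1 else 0) := by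
  intro q hq
  set β : (Fin N → Bool) → ℝ := fun t => ∑ p ∈ F.erase q,
    Real.exp (-d1 p q) * Real.exp ((N : ℝ) * r) *
      (Real.exp ((N : ℝ) * r) - Avec r α p q) * (if sg p q = t then 1 else 0) with hβ
  have hsep' : ∀ p ∈ F.erase q, ∀ k, 2 * r < |p k - q k| := fun p hp k =>
    hsep p (Finset.mem_of_mem_erase hp) q hq (Finset.ne_of_mem_erase hp) k
  have stepA : ∀ t, (∑ s : Fin N → Bool, Mmat r t s * α q s) = ∑ p ∈ F.erase q,
      Real.exp (-d1 p q) * Real.exp (r * ip p q t) *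
        (Real.exp ((N : ℝ) * r) - Avec r α p q) := by
    intro t
    have h0 := hα q hq t
    rw [← Finset.sum_erase_add F _ hq] at h0
    have hqq : (∑ s : Fin N → Bool, α q s * Real.exp (-d1 (q + r • sgnVec s) (q + r • sgnVec t)))
        = ∑ s : Fin N → Bool, Mmat r t s * α q s :=
      Finset.sum_congr rfl fun s _ => by rw [exp_d1_vertex_eq q hr.le s t]; ring
    have hpq : ∀ p ∈ F.erase q,
        (∑ s : Fin N → Bool, α p s * Real.exp (-d1 (p + r • sgnVec s) (q + r • sgnVec t)))
        = Real.exp (-d1 p q) * Real.exp (r * ip p q t) * Avec r α p q := by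
      intro p hp
      rw [Avec, Finset.mul_sum]
      refine Finset.sum_congr rfl fun s _ => ?_
      rw [d1_vertex_ne hr.le (hsep' p hp) s t,
        show -(d1 p q + r * ip p q s - r * ip p q t)
          = -d1 p q + -(r * ip p q s) + r * ip p q t by ring,
        Real.exp_add, Real.exp_add]
      ring
    have hrhs : ∀ p ∈ F.erase q, Real.exp (-d1Inf (cube p r) (q + r • sgnVec t))
        = Real.exp (-d1 p q) * Real.exp (r * ip p q t) * Real.exp ((N : ℝ) * r) := by
      intro p hp
      rw [d1Inf_cube hr (hsep' p hp) t,
        show -(d1 p q - ((N : ℝ) * r + r * ip p q t))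
          = -d1 p q + r * ip p q t + (N : ℝ) * r by ring,
        Real.exp_add, Real.exp_add]
    rw [Finset.sum_congr rfl hpq, hqq, Finset.sum_congr rfl hrhs] at h0
    have h2 : (∑ s : Fin N → Bool, Mmat r t s * α q s)
        = (∑ p ∈ F.erase q, Real.exp (-d1 p q) * Real.exp (r * ip p q t) * Real.exp ((N : ℝ) * r))
          - ∑ p ∈ F.erase q, Real.exp (-d1 p q) * Real.exp (r * ip p q t) * Avec r α p q := by
      rw [← h0]; ring
    rw [h2, ← Finset.sum_sub_distrib]
    exact Finset.sum_congr rfl fun p _ => by ring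
  have stepB : ∀ t, (∑ s : Fin N → Bool, Mmat r t s * β s) = ∑ p ∈ F.erase q,
      Real.exp (-d1 p q) * Real.exp (r * ip p q t) *
        (Real.exp ((N : ℝ) * r) - Avec r α p q) := by
    intro t
    rw [hβ]
    simp only [Finset.mul_sum]
    rw [Finset.sum_comm]
    refine Finset.sum_congr rfl fun p hp => ?_
    have hne : ∀ k, p k ≠ q k := by
      intro k
      have := hsep' p hp k
      intro hcontra
      rw [hcontra, sub_self, abs_zero] at this
      linarith
    have hcollapse : (∑ s : Fin N → Bool, Mmat r t s * (Real.exp (-d1 p q) *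
        Real.exp ((N : ℝ) * r) * (Real.exp ((N : ℝ) * r) - Avec r α p q) *
          (if sg p q = s then 1 else 0)))
        = Mmat r t (sg p q) * (Real.exp (-d1 p q) * Real.exp ((N : ℝ) * r) *
            (Real.exp ((N : ℝ) * r) - Avec r α p q)) := by
      rw [Finset.sum_congr rfl fun s (_ : s ∈ Finset.univ) =>
        (by by_cases h : sg p q = s <;> simp [h] :
          Mmat r t s * (Real.exp (-d1 p q) * Real.exp ((N : ℝ) * r) *
            (Real.exp ((N : ℝ) * r) - Avec r α p q) * (if sg p q = s then 1 else 0))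
          = if sg p q = s then Mmat r t s * (Real.exp (-d1 p q) * Real.exp ((N : ℝ) * r) *
              (Real.exp ((N : ℝ) * r) - Avec r α p q)) else 0),
        Finset.sum_ite_eq]
      simp
    rw [hcollapse, Mmat_at_sg r hne t]
    rw [show Real.exp (-((N : ℝ) * r)) * Real.exp (r * ip p q t) *
        (Real.exp (-d1 p q) * Real.exp ((N : ℝ) * r) * (Real.exp ((N : ℝ) * r) - Avec r α p q))
        = (Real.exp (-((N : ℝ) * r)) * Real.exp ((N : ℝ) * r)) * (Real.exp (-d1 p q) *
          Real.exp (r * ip p q t) * (Real.exp ((N : ℝ) * r) - Avec r α p q)) by ring,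
      ← Real.exp_add, neg_add_cancel, Real.exp_zero, one_mul]
  intro t
  have hdiff : ∀ u, (∑ s : Fin N → Bool, Mmat r u s * (α q s - β s)) = 0 := by
    intro u
    have : (∑ s : Fin N → Bool, Mmat r u s * (α q s - β s))
        = (∑ s : Fin N → Bool, Mmat r u s * α q s)
          - ∑ s : Fin N → Bool, Mmat r u s * β s := by
      rw [← Finset.sum_sub_distrib]
      exact Finset.sum_congr rfl fun s _ => by ring
    rw [this, stepA u, stepB u, sub_self]
  have hfinal : α q t - β t = 0 := by
    have h1 : α q t - β t = ∑ u : Fin N → Bool, (if t = u then 1 else 0) * (α q u - β u) := by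
      rw [Finset.sum_congr rfl fun u (_ : u ∈ Finset.univ) =>
        (by by_cases h : t = u <;> simp [h] :
          (if t = u then (1:ℝ) else 0) * (α q u - β u) = if t = u then α q u - β u else 0),
        Finset.sum_ite_eq]
      simp
    rw [h1]
    have h2 : ∀ u : Fin N → Bool, (if t = u then (1:ℝ) else 0)
        = ∑ s : Fin N → Bool, Wmat r t s * Mmat r s u := fun u => (Wmat_mul_Mmat hr t u).symm
    rw [Finset.sum_congr rfl fun u _ => by rw [h2 u]]
    have h3 : (∑ u : Fin N → Bool, (∑ s : Fin N → Bool, Wmat r t s * Mmat r s u) * (α q u - β u))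
        = ∑ s : Fin N → Bool, Wmat r t s * ∑ u : Fin N → Bool, Mmat r s u * (α q u - β u) := by
      rw [Finset.sum_congr rfl fun u (_ : u ∈ Finset.univ) => Finset.sum_mul _ _ _,
        Finset.sum_comm]
      refine Finset.sum_congr rfl fun s _ => ?_
      rw [Finset.mul_sum]
      exact Finset.sum_congr rfl fun u _ => by ring
    rw [h3, Finset.sum_congr rfl fun s (_ : s ∈ Finset.univ) => by rw [hdiff s]]
    simp
  linarith [hfinal]


noncomputable def Epq {N : ℕ} (p q q' : Fin N → ℝ) : ℝ := ∑ k, eps q q' k * eps p q k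

lemma ip_sg_eq_Epq {N : ℕ} {p q : Fin N → ℝ} (q' : Fin N → ℝ) (hne : ∀ k, p k ≠ q k) :
    ip q q' (sg p q) = Epq p q q' := by
  unfold ip Epq
  exact Finset.sum_congr rfl fun k _ => by rw [← eps_eq_sgnVec_sg (hne k)]

lemma Avec_system {N : ℕ} {F : Finset (Fin N → ℝ)} {r : ℝ} (hr : 0 < r)
    (hsep : ∀ p ∈ F, ∀ q ∈ F, p ≠ q → ∀ k, 2 * r < |p k - q k|)
    {α : (Fin N → ℝ) → (Fin N → Bool) → ℝ} (hα : VertexSystem F r α) :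
    ∀ q ∈ F, ∀ q' ∈ F,
      Avec r α q q' + (∑ p ∈ F.erase q, Real.exp (-d1 p q) * Real.exp ((N : ℝ) * r) *
          Real.exp (-(r * Epq p q q')) * Avec r α p q)
      = ∑ p ∈ F.erase q, Real.exp (-d1 p q) * Real.exp ((N : ℝ) * r) *
          Real.exp ((N : ℝ) * r) * Real.exp (-(r * Epq p q q')) := by
  intro q hq q' hq'
  have hA : Avec r α q q' = ∑ p ∈ F.erase q,
      Real.exp (-d1 p q) * Real.exp ((N : ℝ) * r) *
        (Real.exp ((N : ℝ) * r) - Avec r α p q) * Real.exp (-(r * Epq p q q')) := by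
    rw [Avec]
    rw [Finset.sum_congr rfl fun t (_ : t ∈ Finset.univ) => by
      rw [alpha_formula hr hsep hα q hq t, Finset.mul_sum]]
    rw [Finset.sum_comm]
    refine Finset.sum_congr rfl fun p hp => ?_
    have hne : ∀ k, p k ≠ q k := by
      intro k
      have h5 := hsep p (Finset.mem_of_mem_erase hp) q hq (Finset.ne_of_mem_erase hp) k
      intro hcontra
      rw [hcontra, sub_self, abs_zero] at h5
      linarith
    rw [Finset.sum_congr rfl fun t (_ : t ∈ Finset.univ) =>
      (by by_cases h : sg p q = t <;> simp [h] :
        Real.exp (-(r * ip q q' t)) * (Real.exp (-d1 p q) * Real.exp ((N : ℝ) * r) *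
          (Real.exp ((N : ℝ) * r) - Avec r α p q) * (if sg p q = t then 1 else 0))
        = if sg p q = t then Real.exp (-(r * ip q q' t)) * (Real.exp (-d1 p q) *
            Real.exp ((N : ℝ) * r) * (Real.exp ((N : ℝ) * r) - Avec r α p q)) else 0),
      Finset.sum_ite_eq]
    simp only [Finset.mem_univ, if_true]
    rw [ip_sg_eq_Epq q' hne]
    ring
  rw [hA, Finset.sum_congr rfl (fun p (_ : p ∈ F.erase q) =>
    (by ring : Real.exp (-d1 p q) * Real.exp ((N : ℝ) * r) *
        (Real.exp ((N : ℝ) * r) - Avec r α p q) * Real.exp (-(r * Epq p q q'))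
      = Real.exp (-d1 p q) * Real.exp ((N : ℝ) * r) * Real.exp ((N : ℝ) * r) *
          Real.exp (-(r * Epq p q q'))
        - Real.exp (-d1 p q) * Real.exp ((N : ℝ) * r) * Real.exp (-(r * Epq p q q'))
            * Avec r α p q)), Finset.sum_sub_distrib]
  ring

section OneD
variable {ι : Type*} [Fintype ι] [DecidableEq ι]

noncomputable def aval (x : ι → ℝ) (i : ι) : ℝ := Real.exp (2 * x i)

lemma aval_pos (x : ι → ℝ) (i : ι) : 0 < aval x i := Real.exp_pos _

noncomputable def prevSet (x : ι → ℝ) (i : ι) : Finset ℝ :=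
  insert 0 ((Finset.univ.filter fun j => aval x j < aval x i).image (aval x))

noncomputable def prev (x : ι → ℝ) (i : ι) : ℝ :=
  (prevSet x i).max' ⟨0, Finset.mem_insert_self _ _⟩

lemma prev_lt (x : ι → ℝ) (i : ι) : prev x i < aval x i := by
  rw [prev]; refine (Finset.max'_lt_iff _ _).2 ?_
  intro y hy
  rcases Finset.mem_insert.1 hy with h | h
  · rw [h]; exact aval_pos x i
  · obtain ⟨j, hj, rfl⟩ := Finset.mem_image.1 h
    exact (Finset.mem_filter.1 hj).2

lemma gap_pos (x : ι → ℝ) (i : ι) : 0 < aval x i - prev x i := sub_pos.2 (prev_lt x i)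

lemma aval_inj {x : ι → ℝ} (hx : Function.Injective x) : Function.Injective (aval x) := by
  intro a b hab
  apply hx
  have := Real.exp_injective hab
  linarith

lemma sum_gap_aux (x : ι → ℝ) (hx : Function.Injective x) (n : ℕ) : ∀ i : ι,
    (Finset.univ.filter fun v => aval x v < aval x i).card = n →
    (∑ v ∈ Finset.univ.filter fun v => aval x v ≤ aval x i, (aval x v - prev x v))
      = aval x i := by
  induction n using Nat.strong_induction_on with
  | _ n IH =>
    intro i hcard
    have hsplit : (Finset.univ.filter fun v => aval x v ≤ aval x i)
        = insert i (Finset.univ.filter fun v => aval x v < aval x i) := by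
      ext v
      simp only [Finset.mem_filter, Finset.mem_univ, true_and, Finset.mem_insert]
      constructor
      · intro h
        rcases eq_or_lt_of_le h with he | hlt
        · exact Or.inl (aval_inj hx he)
        · exact Or.inr hlt
      · rintro (rfl | h)
        · exact le_rfl
        · exact h.le
    rw [hsplit, Finset.sum_insert (by simp)]
    have hkey : (∑ v ∈ Finset.univ.filter fun v => aval x v < aval x i,
        (aval x v - prev x v)) = prev x i := by
      rcases Finset.eq_empty_or_nonempty
        (Finset.univ.filter fun v => aval x v < aval x i) with hS | hS
      · rw [hS, Finset.sum_empty]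
        have hps : prevSet x i = {0} := by
          rw [prevSet, hS, Finset.image_empty]; simp
        rw [prev]
        simp [hps]
      · obtain ⟨j₀, hj₀⟩ := hS
        have hmem := Finset.max'_mem (prevSet x i) ⟨0, Finset.mem_insert_self _ _⟩
        rcases Finset.mem_insert.1 hmem with h0 | himg
        · exfalso
          have h1 := Finset.le_max' (prevSet x i) (aval x j₀)
            (Finset.mem_insert_of_mem (Finset.mem_image_of_mem _ hj₀))
          rw [← prev] at h0 h1
          rw [h0] at h1
          exact absurd h1 (not_le.2 (aval_pos x j₀))
        · obtain ⟨j, hj, hjeq⟩ := Finset.mem_image.1 himg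
          rw [← prev] at hjeq
          have hjlt : aval x j < aval x i := (Finset.mem_filter.1 hj).2
          have hSS : (Finset.univ.filter fun v => aval x v < aval x i)
              = Finset.univ.filter fun v => aval x v ≤ aval x j := by
            ext v
            simp only [Finset.mem_filter, Finset.mem_univ, true_and]
            constructor
            · intro hv
              rw [hjeq]
              exact Finset.le_max' _ _
                (Finset.mem_insert_of_mem (Finset.mem_image_of_mem _
                  (by simp only [Finset.mem_filter, Finset.mem_univ, true_and]; exact hv)))
            · intro hv
              exact lt_of_le_of_lt hv hjlt
          have hcard2 : (Finset.univ.filter fun v => aval x v < aval x j).card < n := by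
            rw [← hcard]
            apply Finset.card_lt_card
            rw [Finset.ssubset_iff_of_subset
              (fun v hv => by
                simp only [Finset.mem_filter, Finset.mem_univ, true_and] at hv ⊢
                exact hv.trans hjlt)]
            exact ⟨j, by simp [hjlt], by simp⟩
          rw [hSS, IH _ hcard2 j rfl, hjeq]
    rw [hkey]
    ring

lemma sum_gap (x : ι → ℝ) (hx : Function.Injective x) (i : ι) :
    (∑ v ∈ Finset.univ.filter fun v => aval x v ≤ aval x i, (aval x v - prev x v))
      = aval x i := sum_gap_aux x hx _ i rfl

lemma sum_gap_min (x : ι → ℝ) (hx : Function.Injective x) (i j : ι) :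
    (∑ v ∈ Finset.univ.filter fun v => aval x v ≤ aval x i ∧ aval x v ≤ aval x j,
      (aval x v - prev x v)) = min (aval x i) (aval x j) := by
  rcases le_total (aval x i) (aval x j) with h | h
  · rw [min_eq_left h]
    rw [show (Finset.univ.filter fun v => aval x v ≤ aval x i ∧ aval x v ≤ aval x j)
        = Finset.univ.filter fun v => aval x v ≤ aval x i by
      ext v
      simp only [Finset.mem_filter, Finset.mem_univ, true_and]
      exact ⟨fun hv => hv.1, fun hv => ⟨hv, hv.trans h⟩⟩]
    exact sum_gap x hx i
  · rw [min_eq_right h]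
    rw [show (Finset.univ.filter fun v => aval x v ≤ aval x i ∧ aval x v ≤ aval x j)
        = Finset.univ.filter fun v => aval x v ≤ aval x j by
      ext v
      simp only [Finset.mem_filter, Finset.mem_univ, true_and]
      exact ⟨fun hv => hv.2, fun hv => ⟨hv.trans h, hv⟩⟩]
    exact sum_gap x hx j

noncomputable def gvec (x : ι → ℝ) (i v : ι) : ℝ :=
  Real.exp (-x i) * (if aval x v ≤ aval x i then Real.sqrt (aval x v - prev x v) else 0)

lemma gvec_self_pos (x : ι → ℝ) (i : ι) : 0 < gvec x i i := by
  rw [gvec, if_pos le_rfl]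
  exact mul_pos (Real.exp_pos _) (Real.sqrt_pos.2 (gap_pos x i))

lemma gram1 (x : ι → ℝ) (hx : Function.Injective x) (i j : ι) :
    Real.exp (-|x i - x j|) = ∑ v, gvec x i v * gvec x j v := by
  have hterm : ∀ v, gvec x i v * gvec x j v = Real.exp (-x i) * Real.exp (-x j) *
      (if aval x v ≤ aval x i ∧ aval x v ≤ aval x j then aval x v - prev x v else 0) := by
    intro v
    rw [gvec, gvec]
    by_cases h1 : aval x v ≤ aval x i <;> by_cases h2 : aval x v ≤ aval x j
    · rw [if_pos h1, if_pos h2, if_pos (show _ ∧ _ from ⟨h1, h2⟩),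
        show Real.exp (-x i) * Real.sqrt (aval x v - prev x v) *
          (Real.exp (-x j) * Real.sqrt (aval x v - prev x v))
          = Real.exp (-x i) * Real.exp (-x j) *
            (Real.sqrt (aval x v - prev x v) * Real.sqrt (aval x v - prev x v)) by ring,
        Real.mul_self_sqrt (gap_pos x v).le]
    · simp [h1, h2]
    · simp [h1, h2]
    · simp [h1, h2]
  rw [Finset.sum_congr rfl fun v _ => hterm v, ← Finset.mul_sum, ← Finset.sum_filter,
    sum_gap_min x hx i j]
  rcases le_total (x i) (x j) with h | h
  · rw [min_eq_left (by unfold aval; exact Real.exp_le_exp.2 (by linarith)),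
      abs_of_nonpos (by linarith), aval, ← Real.exp_add, ← Real.exp_add]
    congr 1
    ring
  · rw [min_eq_right (by unfold aval; exact Real.exp_le_exp.2 (by linarith)),
      abs_of_nonneg (by linarith), aval, ← Real.exp_add, ← Real.exp_add]
    congr 1
    ring

end OneD

lemma kernel_inj {N : ℕ} (F : Finset (Fin N → ℝ))
    (hd : ∀ p q : ↥F, p ≠ q → ∀ k, (p : Fin N → ℝ) k ≠ (q : Fin N → ℝ) k)
    (y : ↥F → ℝ)
    (hy : ∀ q : ↥F, (∑ p : ↥F, Real.exp (-d1 (p : Fin N → ℝ) (q : Fin N → ℝ)) * y p) = 0) :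
    ∀ p, y p = 0 := by
  rcases Nat.eq_zero_or_pos N with hN | hN
  · subst hN
    intro p
    haveI : Subsingleton ↥F := ⟨fun a b => Subtype.ext (funext fun k => k.elim0)⟩
    have h0 := hy p
    rw [Fintype.sum_subsingleton _ p] at h0
    rw [d1_self] at h0
    simpa using h0
  · set k0 : Fin N := ⟨0, hN⟩ with hk0
    have hxinj : ∀ k : Fin N, Function.Injective (fun p : ↥F => (p : Fin N → ℝ) k) := by
      intro k a b hab
      by_contra hne
      exact hd a b hne k hab
    set G : ↥F → (Fin N → ↥F) → ℝ :=
      fun p V => ∏ k, gvec (fun u : ↥F => (u : Fin N → ℝ) k) p (V k) with hG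
    have hgram : ∀ p q : ↥F, Real.exp (-d1 (p : Fin N → ℝ) (q : Fin N → ℝ))
        = ∑ V : Fin N → ↥F, G p V * G q V := by
      intro p q
      rw [show d1 (p : Fin N → ℝ) (q : Fin N → ℝ)
          = ∑ k, |(p : Fin N → ℝ) k - (q : Fin N → ℝ) k| from rfl,
        ← Finset.sum_neg_distrib, Real.exp_sum,
        Finset.prod_congr rfl fun k _ =>
          gram1 (fun u : ↥F => (u : Fin N → ℝ) k) (hxinj k) p q,
        Fintype.prod_sum fun k v => gvec (fun u : ↥F => (u : Fin N → ℝ) k) p v *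
          gvec (fun u : ↥F => (u : Fin N → ℝ) k) q v]
      exact Finset.sum_congr rfl fun V _ => by rw [hG, ← Finset.prod_mul_distrib]
    have hzero : ∀ V : Fin N → ↥F, (∑ p : ↥F, y p * G p V) = 0 := by
      have hQ : (∑ V : Fin N → ↥F, (∑ p : ↥F, y p * G p V) ^ 2) = 0 := by
        have hlhs : (∑ q : ↥F, y q *
            (∑ p : ↥F, Real.exp (-d1 (p : Fin N → ℝ) (q : Fin N → ℝ)) * y p)) = 0 := by
          rw [Finset.sum_congr rfl fun q _ => by rw [hy q, mul_zero]]
          exact Finset.sum_const_zero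
        have hterm : ∀ q p : ↥F, y q * (Real.exp (-d1 (p : Fin N → ℝ) (q : Fin N → ℝ)) * y p)
            = ∑ V : Fin N → ↥F, (y p * G p V) * (y q * G q V) := by
          intro q p
          rw [hgram p q, Finset.sum_mul, Finset.mul_sum]
          exact Finset.sum_congr rfl fun V _ => by ring
        rw [← hlhs,
          Finset.sum_congr rfl fun (q : ↥F) (_ : q ∈ Finset.univ) => by
            rw [Finset.mul_sum,
              Finset.sum_congr rfl fun (p : ↥F) (_ : p ∈ Finset.univ) => hterm q p]]
        rw [Finset.sum_congr rfl fun (q : ↥F) (_ : q ∈ Finset.univ) => Finset.sum_comm,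
          Finset.sum_comm]
        refine Finset.sum_congr rfl fun V _ => ?_
        rw [sq, Finset.sum_mul_sum]
        exact Finset.sum_congr rfl fun a _ => Finset.sum_congr rfl fun b _ => by ring
      intro V
      have h1 := (Finset.sum_eq_zero_iff_of_nonneg fun V _ => sq_nonneg _).1 hQ V
        (Finset.mem_univ V)
      exact pow_eq_zero_iff two_ne_zero |>.1 h1
    by_contra hne
    push_neg at hne
    obtain ⟨p₀, hp₀⟩ := hne
    obtain ⟨pm, hpmT, hpmax⟩ := (Finset.univ.filter fun p : ↥F => y p ≠ 0).exists_max_image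
      (fun p : ↥F => (p : Fin N → ℝ) k0) ⟨p₀, by simp [hp₀]⟩
    have h0 := hzero (fun _ => pm)
    rw [Finset.sum_eq_single pm
      (fun p _ hppm => by
        by_cases hyp : y p = 0
        · rw [hyp, zero_mul]
        · have hple := hpmax p (by simp [hyp])
          have hplt : (p : Fin N → ℝ) k0 < (pm : Fin N → ℝ) k0 :=
            lt_of_le_of_ne hple (hd p pm hppm k0)
          have hgv : gvec (fun u : ↥F => (u : Fin N → ℝ) k0) p pm = 0 := by
            rw [gvec, if_neg, mul_zero]
            rw [not_le]
            exact Real.exp_lt_exp.2 (by linarith)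
          rw [show G p (fun _ => pm) = 0 from
            Finset.prod_eq_zero (Finset.mem_univ k0) hgv, mul_zero])
      (fun hpm => absurd (Finset.mem_univ pm) hpm)] at h0
    have hGpos : 0 < G pm (fun _ => pm) :=
      Finset.prod_pos fun k _ => gvec_self_pos _ pm
    have hypm : y pm ≠ 0 := by
      have := (Finset.mem_filter.1 hpmT).2
      exact this
    exact hypm ((mul_eq_zero.1 h0).resolve_right hGpos.ne')

noncomputable def MM {N : ℕ} (F : Finset (Fin N → ℝ)) (r : ℝ) :
    Matrix (↥F × ↥F) (↥F × ↥F) ℝ :=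
  fun x y => (if y = x then 1 else 0) +
    (if y.2 = x.1 ∧ y.1 ≠ x.1 then
      Real.exp (-d1 (y.1 : Fin N → ℝ) (x.1 : Fin N → ℝ)) * Real.exp ((N : ℝ) * r) *
        Real.exp (-(r * Epq (y.1 : Fin N → ℝ) (x.1 : Fin N → ℝ) (x.2 : Fin N → ℝ)))
      else 0)

noncomputable def hh {N : ℕ} (F : Finset (Fin N → ℝ)) (r : ℝ) : (↥F × ↥F) → ℝ :=
  fun x => ∑ p : ↥F, (if p ≠ x.1 then
    Real.exp (-d1 (p : Fin N → ℝ) (x.1 : Fin N → ℝ)) * Real.exp ((N : ℝ) * r) *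
      Real.exp ((N : ℝ) * r) *
        Real.exp (-(r * Epq (p : Fin N → ℝ) (x.1 : Fin N → ℝ) (x.2 : Fin N → ℝ))) else 0)

lemma MM_mulVec {N : ℕ} (F : Finset (Fin N → ℝ)) (r : ℝ) (v : ↥F × ↥F → ℝ) (x : ↥F × ↥F) :
    (MM F r *ᵥ v) x = v x + ∑ p : ↥F, (if p ≠ x.1 then
      Real.exp (-d1 (p : Fin N → ℝ) (x.1 : Fin N → ℝ)) * Real.exp ((N : ℝ) * r) *
        Real.exp (-(r * Epq (p : Fin N → ℝ) (x.1 : Fin N → ℝ) (x.2 : Fin N → ℝ))) * v (p, x.1)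
      else 0) := by
  rw [Matrix.mulVec, dotProduct]
  simp only [MM]
  rw [Finset.sum_congr rfl fun y (_ : y ∈ Finset.univ) =>
    (add_mul _ _ _ : MM F r x y * v y = (if y = x then (1:ℝ) else 0) * v y + _),
    Finset.sum_add_distrib]
  congr 1
  · rw [Finset.sum_congr rfl fun y (_ : y ∈ Finset.univ) =>
      (by by_cases h : y = x <;> simp [h] :
        (if y = x then (1:ℝ) else 0) * v y = if y = x then v y else 0),
      Finset.sum_ite_eq']
    simp
  · rw [Fintype.sum_prod_type]
    rw [Finset.sum_congr rfl fun (a : ↥F) (_ : a ∈ Finset.univ) =>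
      Finset.sum_congr rfl fun (b : ↥F) (_ : b ∈ Finset.univ) =>
        (by by_cases h1 : b = x.1 <;> by_cases h2 : a ≠ x.1 <;> simp [h1, h2] :
          (if (a, b).2 = x.1 ∧ (a, b).1 ≠ x.1 then
            Real.exp (-d1 ((a, b).1 : Fin N → ℝ) (x.1 : Fin N → ℝ)) * Real.exp ((N : ℝ) * r) *
              Real.exp (-(r * Epq ((a, b).1 : Fin N → ℝ) (x.1 : Fin N → ℝ) (x.2 : Fin N → ℝ)))
            else 0) * v (a, b)
          = if b = x.1 then (if a ≠ x.1 then
              Real.exp (-d1 (a : Fin N → ℝ) (x.1 : Fin N → ℝ)) * Real.exp ((N : ℝ) * r) *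
                Real.exp (-(r * Epq (a : Fin N → ℝ) (x.1 : Fin N → ℝ) (x.2 : Fin N → ℝ)))
                  * v (a, b) else 0) else 0)]
    rw [Finset.sum_congr rfl fun (a : ↥F) (_ : a ∈ Finset.univ) => Finset.sum_ite_eq' _ x.1 _]
    simp

lemma sum_erase_subtype {N : ℕ} (F : Finset (Fin N → ℝ)) (q : ↥F) (g : (Fin N → ℝ) → ℝ) :
    (∑ p ∈ F.erase ↑q, g p) = ∑ p : ↥F, (if p ≠ q then g ↑p else 0) := by
  have h1 : ∀ p : ↥F, (if p ≠ q then g ↑p else 0)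
      = (fun z => if z ≠ (q : Fin N → ℝ) then g z else 0) ↑p := by
    intro p
    by_cases h : p = q
    · simp [h]
    · have h2 : (p : Fin N → ℝ) ≠ ↑q := Subtype.coe_ne_coe.2 h
      simp [h, h2]
  rw [Finset.sum_congr rfl fun p _ => h1 p, Finset.sum_coe_sort F
    (fun z => if z ≠ (q : Fin N → ℝ) then g z else 0), ← Finset.sum_filter,
    Finset.filter_ne' F (q : Fin N → ℝ)]

lemma MM_system {N : ℕ} {F : Finset (Fin N → ℝ)} {r : ℝ} (hr : 0 < r)
    (hsep : ∀ p ∈ F, ∀ q ∈ F, p ≠ q → ∀ k, 2 * r < |p k - q k|)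
    {α : (Fin N → ℝ) → (Fin N → Bool) → ℝ} (hα : VertexSystem F r α) :
    MM F r *ᵥ (fun x : ↥F × ↥F => Avec r α (x.1 : Fin N → ℝ) (x.2 : Fin N → ℝ)) = hh F r := by
  funext x
  rw [MM_mulVec]
  have hsys := Avec_system hr hsep hα (x.1 : Fin N → ℝ) x.1.2 (x.2 : Fin N → ℝ) x.2.2
  rw [sum_erase_subtype F x.1 (fun p => Real.exp (-d1 p (x.1 : Fin N → ℝ)) *
      Real.exp ((N : ℝ) * r) * Real.exp (-(r * Epq p (x.1 : Fin N → ℝ) (x.2 : Fin N → ℝ))) *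
        Avec r α p (x.1 : Fin N → ℝ)),
    sum_erase_subtype F x.1 (fun p => Real.exp (-d1 p (x.1 : Fin N → ℝ)) *
      Real.exp ((N : ℝ) * r) * Real.exp ((N : ℝ) * r) *
        Real.exp (-(r * Epq p (x.1 : Fin N → ℝ) (x.2 : Fin N → ℝ))))] at hsys
  rw [hh, ← hsys]

lemma MM_zero_det {N : ℕ} (F : Finset (Fin N → ℝ))
    (hd : ∀ p q : ↥F, p ≠ q → ∀ k, (p : Fin N → ℝ) k ≠ (q : Fin N → ℝ) k) :
    (MM F 0).det ≠ 0 := by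
  intro hdet
  obtain ⟨v, hv0, hveq⟩ := (Matrix.exists_mulVec_eq_zero_iff).2 hdet
  have hcomp : ∀ x : ↥F × ↥F, v x + ∑ p : ↥F, (if p ≠ x.1 then
      Real.exp (-d1 (p : Fin N → ℝ) (x.1 : Fin N → ℝ)) * v (p, x.1) else 0) = 0 := by
    intro x
    have h1 := congrFun hveq x
    rw [MM_mulVec] at h1
    simpa only [mul_zero, zero_mul, neg_zero, Real.exp_zero, mul_one, one_mul,
      Pi.zero_apply] using h1
  set yv : ↥F → ℝ := fun q => v (q, q) with hyv
  have hconst : ∀ x : ↥F × ↥F, v x = yv x.1 := by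
    intro x
    have h1 := hcomp x
    have h2 := hcomp (x.1, x.1)
    simp only [hyv]
    linarith [h1, h2]
  have hker : ∀ q : ↥F, (∑ p : ↥F, Real.exp (-d1 (p : Fin N → ℝ) (q : Fin N → ℝ)) * yv p)
      = 0 := by
    intro q
    have h1 := hcomp (q, q)
    have hsplit : (∑ p : ↥F, Real.exp (-d1 (p : Fin N → ℝ) (q : Fin N → ℝ)) * yv p)
        = (∑ p : ↥F, (if p = q then Real.exp (-d1 (p : Fin N → ℝ) (q : Fin N → ℝ)) * yv p
            else 0))
          + ∑ p : ↥F, (if p ≠ q then Real.exp (-d1 (p : Fin N → ℝ) (q : Fin N → ℝ)) * yv p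
              else 0) := by
      rw [← Finset.sum_add_distrib]
      refine Finset.sum_congr rfl fun p _ => ?_
      by_cases h : p = q <;> simp [h]
    have hdiag : (∑ p : ↥F, (if p = q then
        Real.exp (-d1 (p : Fin N → ℝ) (q : Fin N → ℝ)) * yv p else 0)) = yv q := by
      rw [Finset.sum_ite_eq' Finset.univ q
        (fun p => Real.exp (-d1 (p : Fin N → ℝ) (q : Fin N → ℝ)) * yv p)]
      simp [d1_self]
    rw [hsplit, hdiag]
    have hsame : (∑ p : ↥F, (if p ≠ q then
        Real.exp (-d1 (p : Fin N → ℝ) (q : Fin N → ℝ)) * yv p else 0))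
        = ∑ p : ↥F, (if p ≠ (q, q).1 then
            Real.exp (-d1 (p : Fin N → ℝ) ((q, q).1 : Fin N → ℝ)) * v (p, (q, q).1) else 0) := by
      refine Finset.sum_congr rfl fun p _ => ?_
      by_cases h : p = q <;> simp [h, hconst (p, q)]
    rw [hsame]
    linarith [h1]
  have hzero := kernel_inj F hd yv hker
  apply hv0
  funext x
  rw [hconst x, hzero x.1]
  rfl
  
lemma MM_zero_xstar {N : ℕ} (F : Finset (Fin N → ℝ)) (w : (Fin N → ℝ) → ℝ)
    (hw : ∀ p ∈ F, ∑ q ∈ F, Real.exp (-d1 p q) * w q = 1) :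
    MM F 0 *ᵥ (fun x : ↥F × ↥F => 1 - w ↑x.1) = hh F 0 := by
  funext x
  rw [MM_mulVec, hh]
  simp only [mul_zero, zero_mul, neg_zero, Real.exp_zero, mul_one, one_mul]
  have hsum1 : (∑ p : ↥F, Real.exp (-d1 (p : Fin N → ℝ) (x.1 : Fin N → ℝ)) * w ↑p) = 1 := by
    rw [Finset.sum_coe_sort F (fun z => Real.exp (-d1 z (x.1 : Fin N → ℝ)) * w z),
      Finset.sum_congr rfl fun z _ => by rw [d1_symm z (x.1 : Fin N → ℝ)]]
    exact hw ↑x.1 x.1.2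
  have h2 : (∑ p : ↥F, (if p = x.1 then
      Real.exp (-d1 (p : Fin N → ℝ) (x.1 : Fin N → ℝ)) * w ↑p else 0)) = w ↑x.1 := by
    rw [Finset.sum_ite_eq' Finset.univ x.1
      (fun p => Real.exp (-d1 (p : Fin N → ℝ) (x.1 : Fin N → ℝ)) * w ↑p)]
    simp [d1_self]
  have h3 : (∑ p : ↥F, Real.exp (-d1 (p : Fin N → ℝ) (x.1 : Fin N → ℝ)) * w ↑p)
      = (∑ p : ↥F, (if p = x.1 then
          Real.exp (-d1 (p : Fin N → ℝ) (x.1 : Fin N → ℝ)) * w ↑p else 0))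
        + ∑ p : ↥F, (if p ≠ x.1 then
            Real.exp (-d1 (p : Fin N → ℝ) (x.1 : Fin N → ℝ)) * w ↑p else 0) := by
    rw [← Finset.sum_add_distrib]
    refine Finset.sum_congr rfl fun p _ => ?_
    by_cases h : p = x.1 <;> simp [h]
  have hsplit : (∑ p : ↥F, (if p ≠ x.1 then
      Real.exp (-d1 (p : Fin N → ℝ) (x.1 : Fin N → ℝ)) * w ↑p else 0)) = 1 - w ↑x.1 := by
    rw [h2, hsum1] at h3
    linarith [h3]
  have h4 : (∑ p : ↥F, (if p ≠ x.1 then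
      Real.exp (-d1 (p : Fin N → ℝ) (x.1 : Fin N → ℝ)) * (1 - w ↑p) else 0))
      = (∑ p : ↥F, (if p ≠ x.1 then
          Real.exp (-d1 (p : Fin N → ℝ) (x.1 : Fin N → ℝ)) else 0))
        - ∑ p : ↥F, (if p ≠ x.1 then
            Real.exp (-d1 (p : Fin N → ℝ) (x.1 : Fin N → ℝ)) * w ↑p else 0) := by
    rw [← Finset.sum_sub_distrib]
    refine Finset.sum_congr rfl fun p _ => ?_
    by_cases h : p = x.1 <;> simp [h] <;> ring
  rw [h4, hsplit]
  ring

lemma MM_cont {N : ℕ} (F : Finset (Fin N → ℝ)) : Continuous fun r : ℝ => MM F r := by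
  apply continuous_matrix
  intro x y
  simp only [MM]
  refine continuous_const.add ?_
  by_cases hc : y.2 = x.1 ∧ y.1 ≠ x.1
  · simp only [if_pos hc]
    fun_prop
  · simp only [if_neg hc]
    exact continuous_const

lemma hh_cont {N : ℕ} (F : Finset (Fin N → ℝ)) : Continuous fun r : ℝ => hh F r := by
  apply continuous_pi
  intro x
  simp only [hh]
  refine continuous_finset_sum _ fun p _ => ?_
  by_cases hc : p ≠ x.1
  · simp only [if_pos hc]
    fun_prop
  · simp only [if_neg hc]
    exact continuous_const

end Aux13

theorem stmt13 {N : ℕ} (F : Finset (Fin N → ℝ)) (hF : F.Nonempty)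
    (hskew : IsSkew (F : Set (Fin N → ℝ)))
    -- `w` is the weighting of `F` (with respect to the 1-metric),
    -- so that `mg F = ∑ p ∈ F, w p`
    (w : (Fin N → ℝ) → ℝ)
    (hw : ∀ p ∈ F, ∑ q ∈ F, Real.exp (-d1 p q) * w q = 1)
    -- `α r` is the (unique) solution of the Vertex System for each admissible `r`
    (α : ℝ → (Fin N → ℝ) → (Fin N → Bool) → ℝ)
    (hα : ∀ r : ℝ, 0 < r → ENNReal.ofReal (2 * r) < skewness (F : Set (Fin N → ℝ)) →
      VertexSystem F r (α r)) :
    (∀ p ∈ F, Tendsto (fun r => ∑ s : Fin N → Bool, α r p s) (𝓝[>] 0)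
      (𝓝 (1 - w p))) ∧
    Tendsto (fun r => ∑ p ∈ F, ∑ s : Fin N → Bool, α r p s) (𝓝[>] 0)
      (𝓝 ((F.card : ℝ) - ∑ p ∈ F, w p)) := by
  classical
  have hskew' : 0 < skewness (F : Set (Fin N → ℝ)) := hskew
  have hle : ∀ p ∈ F, ∀ q ∈ F, p ≠ q → ∀ k : Fin N,
      skewness (F : Set (Fin N → ℝ)) ≤ ENNReal.ofReal |p k - q k| := by
    intro p hp q hq hpq k
    have hpa : p ∈ (F : Set (Fin N → ℝ)) := Finset.mem_coe.2 hp
    have hqa : q ∈ (F : Set (Fin N → ℝ)) := Finset.mem_coe.2 hq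
    have hne : (⟨p, hpa⟩ : (F : Set (Fin N → ℝ))) ≠ ⟨q, hqa⟩ :=
      fun h => hpq (congrArg Subtype.val h)
    simp only [skewness]
    exact le_trans (iInf_le _ ⟨p, hpa⟩) (le_trans (iInf_le _ ⟨q, hqa⟩)
      (le_trans (iInf_le _ hne) (iInf_le _ k)))
  have hd : ∀ p q : ↥F, p ≠ q → ∀ k, (p : Fin N → ℝ) k ≠ (q : Fin N → ℝ) k := by
    intro p q hpq k hk
    have h1 := hle ↑p p.2 ↑q q.2 (Subtype.coe_ne_coe.2 hpq) k
    rw [hk, sub_self, abs_zero, ENNReal.ofReal_zero] at h1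
    exact absurd (lt_of_lt_of_le hskew' h1) (lt_irrefl 0)
  have hsep_of : ∀ r : ℝ, 0 < r →
      ENNReal.ofReal (2 * r) < skewness (F : Set (Fin N → ℝ)) →
      ∀ p ∈ F, ∀ q ∈ F, p ≠ q → ∀ k, 2 * r < |p k - q k| := by
    intro r hr hlt p hp q hq hpq k
    by_contra hc
    push_neg at hc
    exact lt_irrefl _ (lt_of_lt_of_le hlt
      ((hle p hp q hq hpq k).trans (ENNReal.ofReal_le_ofReal hc)))
  have hdet0 : (Aux13.MM F 0).det ≠ 0 := Aux13.MM_zero_det F hd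
  have hMcont := Aux13.MM_cont F
  have hhcont := Aux13.hh_cont F
  have hdet_t : Tendsto (fun r => (Aux13.MM F r).det) (𝓝[>] (0:ℝ))
      (𝓝 ((Aux13.MM F 0).det)) :=
    ((hMcont.matrix_det).tendsto 0).mono_left nhdsWithin_le_nhds
  have hdet_ev : ∀ᶠ r in 𝓝[>] (0:ℝ), (Aux13.MM F r).det ≠ 0 := hdet_t.eventually_ne hdet0
  have hpos_ev : ∀ᶠ r in 𝓝[>] (0:ℝ), 0 < r :=
    Filter.eventually_of_mem self_mem_nhdsWithin fun r hr => hr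
  have hskew_ev : ∀ᶠ r in 𝓝[>] (0:ℝ),
      ENNReal.ofReal (2 * r) < skewness (F : Set (Fin N → ℝ)) := by
    have hcont : Continuous fun r : ℝ => ENNReal.ofReal (2 * r) :=
      ENNReal.continuous_ofReal.comp (continuous_const.mul continuous_id)
    have hto : Tendsto (fun r : ℝ => ENNReal.ofReal (2 * r)) (𝓝[>] (0:ℝ)) (𝓝 0) := by
      have h6 := (hcont.tendsto (0:ℝ)).mono_left
        (nhdsWithin_le_nhds (a := (0:ℝ)) (s := Set.Ioi 0))
      simpa using h6
    exact hto.eventually_lt_const hskew'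
  set Φ : ℝ → (↥F × ↥F) → ℝ :=
    fun r => ((Aux13.MM F r).det)⁻¹ • (Matrix.mulVec (Aux13.MM F r).adjugate (Aux13.hh F r)) with hΦ
  have hΦtend : ∀ x : ↥F × ↥F, Tendsto (fun r => Φ r x) (𝓝[>] (0:ℝ)) (𝓝 (Φ 0 x)) := by
    intro x
    have hc : Continuous fun r => (Matrix.mulVec (Aux13.MM F r).adjugate (Aux13.hh F r)) x := by
      simp only [Matrix.mulVec, dotProduct]
      refine continuous_finset_sum _ fun y _ => Continuous.mul ?_ ?_
      · exact (continuous_apply y).comp ((continuous_apply x).comp hMcont.matrix_adjugate)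
      · exact (continuous_apply y).comp hhcont
    have h2 : Tendsto (fun r => ((Aux13.MM F r).det)⁻¹) (𝓝[>] (0:ℝ))
        (𝓝 (((Aux13.MM F 0).det)⁻¹)) := hdet_t.inv₀ hdet0
    have h3 : Tendsto (fun r => (Matrix.mulVec (Aux13.MM F r).adjugate (Aux13.hh F r)) x) (𝓝[>] (0:ℝ))
        (𝓝 ((Matrix.mulVec (Aux13.MM F 0).adjugate (Aux13.hh F 0)) x)) :=
      (hc.tendsto 0).mono_left nhdsWithin_le_nhds
    have h4 := h2.mul h3
    simpa [hΦ] using h4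
  have hΦ0 : ∀ x : ↥F × ↥F, Φ 0 x = 1 - w ↑x.1 := by
    intro x
    have h1 : Matrix.mulVec (Aux13.MM F 0).adjugate (Aux13.hh F 0)
        = (Aux13.MM F 0).det • (fun x : ↥F × ↥F => 1 - w ↑x.1) := by
      rw [← Aux13.MM_zero_xstar F w hw, Matrix.mulVec_mulVec, Matrix.adjugate_mul,
        Matrix.smul_mulVec, Matrix.one_mulVec]
    rw [hΦ]
    simp only [h1, Pi.smul_apply, smul_eq_mul]
    rw [← mul_assoc, inv_mul_cancel₀ hdet0, one_mul]
  have hEv : ∀ᶠ r in 𝓝[>] (0:ℝ), ∀ x : ↥F × ↥F,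
      Aux13.Avec r (α r) (x.1 : Fin N → ℝ) (x.2 : Fin N → ℝ) = Φ r x := by
    filter_upwards [hpos_ev, hskew_ev, hdet_ev] with r hr hsk hdet
    have hsys := Aux13.MM_system hr (hsep_of r hr hsk) (hα r hr hsk)
    intro x
    have h1 : Matrix.mulVec (Aux13.MM F r).adjugate (Aux13.hh F r)
        = (Aux13.MM F r).det • (fun x : ↥F × ↥F =>
            Aux13.Avec r (α r) (x.1 : Fin N → ℝ) (x.2 : Fin N → ℝ)) := by
      rw [← hsys, Matrix.mulVec_mulVec, Matrix.adjugate_mul, Matrix.smul_mulVec,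
        Matrix.one_mulVec]
    rw [hΦ]
    simp only [h1, Pi.smul_apply, smul_eq_mul]
    rw [← mul_assoc, inv_mul_cancel₀ hdet, one_mul]
  have hmain : ∀ p ∈ F, Tendsto (fun r => ∑ s : Fin N → Bool, α r p s) (𝓝[>] (0:ℝ))
      (𝓝 (1 - w p)) := by
    intro p hp
    have hx : ∀ᶠ r in 𝓝[>] (0:ℝ), (∑ s : Fin N → Bool, α r p s)
        = Φ r (⟨p, hp⟩, ⟨p, hp⟩) := by
      filter_upwards [hEv] with r h
      rw [← h (⟨p, hp⟩, ⟨p, hp⟩), Aux13.Avec]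
      exact (Finset.sum_congr rfl fun s _ => by
        rw [Aux13.ip_self, mul_zero, neg_zero, Real.exp_zero, one_mul]).symm
    have h5 := hΦtend (⟨p, hp⟩, ⟨p, hp⟩)
    rw [hΦ0 (⟨p, hp⟩, ⟨p, hp⟩)] at h5
    exact Filter.Tendsto.congr' (hx.mono fun r h => h.symm) h5
  refine ⟨hmain, ?_⟩
  have h2 := tendsto_finset_sum F (fun p hp => hmain p hp)
  rw [show (∑ p ∈ F, (1 - w p)) = (F.card : ℝ) - ∑ p ∈ F, w p by
    rw [Finset.sum_sub_distrib, Finset.sum_const, nsmul_eq_mul, mul_one]] at h2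
  exact h2
end
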